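/- arXiv:1403.7736 — 9 statements merged into one kernel-verified Lean document; each statement's English description precedes it below -/
import Mathlib

section
/- Let g ≥ 2 be an even integer. The presented group with generators a_1, b_1, …, a_g, b_g and relator set consisting of the genus-g surface relator r_g, the generators b_1, …, b_g, and the words a_i a_{g+1-i} for 1 ≤ i ≤ g/2, is isomorphic to the free group of rank g/2. -/
/-- Generators of the genus-`g` surface group presentation: `Sum.inl i` is `a_{i+1}`,
`Sum.inr i` is `b_{i+1}` (`0`-based indexing). -/
abbrev SurfGen (g : ℕ) := Fin g ⊕ Fin g

/-- The generator `a_{i+1}` as an element of the free group. -/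
def genA (g : ℕ) (i : Fin g) : FreeGroup (SurfGen g) := FreeGroup.of (Sum.inl i)

/-- The generator `b_{i+1}` as an element of the free group. -/
def genB (g : ℕ) (i : Fin g) : FreeGroup (SurfGen g) := FreeGroup.of (Sum.inr i)

/-- The word `c_i = b_i⁻¹ ⋯ b_1⁻¹ (a_1 b_1 a_1⁻¹) ⋯ (a_i b_i a_i⁻¹)` (here `i : ℕ`, `1`-based). -/
def cword (g i : ℕ) : FreeGroup (SurfGen g) :=
  ((((List.finRange g).take i).reverse.map fun j => (genB g j)⁻¹).prod) *
  ((((List.finRange g).take i).map fun j => genA g j * genB g j * (genA g j)⁻¹).prod)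

/-- The genus-`g` surface relator
`r_g = b_g⁻¹ ⋯ b_1⁻¹ (a_1 b_1 a_1⁻¹) ⋯ (a_g b_g a_g⁻¹)`. -/
def surfRel (g : ℕ) : FreeGroup (SurfGen g) := cword g g

section Aux

variable (g : ℕ)

/-- Target function on generators: kill the `b`'s, pair up the `a`'s. -/
noncomputable def surfFun : SurfGen g → FreeGroup (Fin (g / 2)) := fun x =>
  match x with
  | Sum.inl i => if h : (i : ℕ) < g / 2 then FreeGroup.of ⟨i, h⟩
      else if h2 : g - 1 - (i : ℕ) < g / 2 then
        (FreeGroup.of (⟨g - 1 - (i : ℕ), h2⟩ : Fin (g / 2)))⁻¹ else 1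
  | Sum.inr _ => 1

lemma surfFun_genA_lt (i : Fin g) (h : (i : ℕ) < g / 2) :
    FreeGroup.lift (surfFun g) (genA g i) = FreeGroup.of (⟨i, h⟩ : Fin (g / 2)) := by
  simp [genA, surfFun, h]

lemma surfFun_genA_ge (i : Fin g) (h : ¬ (i : ℕ) < g / 2) (h2 : g - 1 - (i : ℕ) < g / 2) :
    FreeGroup.lift (surfFun g) (genA g i) =
      (FreeGroup.of (⟨g - 1 - (i : ℕ), h2⟩ : Fin (g / 2)))⁻¹ := by
  simp [genA, surfFun, h, h2]

lemma surfFun_genB (i : Fin g) : FreeGroup.lift (surfFun g) (genB g i) = 1 := by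
  simp [genB, surfFun]

lemma surfFun_surfRel : FreeGroup.lift (surfFun g) (surfRel g) = 1 := by
  unfold surfRel cword
  rw [map_mul, map_list_prod, map_list_prod]
  rw [List.prod_eq_one, List.prod_eq_one, one_mul]
  · intro x hx
    simp only [List.map_map, List.mem_map, Function.comp] at hx
    obtain ⟨j, -, rfl⟩ := hx
    rw [map_mul, map_mul, map_inv, surfFun_genB, mul_one, mul_inv_cancel]
  · intro x hx
    simp only [List.map_map, List.mem_map, Function.comp] at hx
    obtain ⟨j, -, rfl⟩ := hx
    rw [map_inv, surfFun_genB, inv_one]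

end Aux

/-- for even `g ≥ 2`, the presented group
`⟨a_1, b_1, …, a_g, b_g ∣ r_g, b_1, …, b_g, a_i a_{g+1-i} (1 ≤ i ≤ g/2)⟩`
is isomorphic to the free group of rank `g/2`. -/
theorem stmt0 (g : ℕ) (hg : 2 ≤ g) (heven : Even g) :
    Nonempty (PresentedGroup
      (({surfRel g}
        ∪ Set.range (fun i : Fin g => genB g i)
        ∪ Set.range (fun i : Fin (g / 2) =>
            genA g (Fin.castLE (Nat.div_le_self g 2) i) *
              genA g ((Fin.castLE (Nat.div_le_self g 2) i).rev))) : Set (FreeGroup (SurfGen g)))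
      ≃* FreeGroup (Fin (g / 2))) := by
  set rels : Set (FreeGroup (SurfGen g)) :=
    ({surfRel g}
        ∪ Set.range (fun i : Fin g => genB g i)
        ∪ Set.range (fun i : Fin (g / 2) =>
            genA g (Fin.castLE (Nat.div_le_self g 2) i) *
              genA g ((Fin.castLE (Nat.div_le_self g 2) i).rev))) with hrels
  have hgdiv : g / 2 + g / 2 = g := by
    obtain ⟨m, rfl⟩ := heven; omega
  have hrel1 : ∀ r ∈ rels, FreeGroup.lift (surfFun g) r = 1 := by
    rintro r (⟨rfl | ⟨i, rfl⟩⟩ | ⟨i, rfl⟩)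
    · exact surfFun_surfRel g
    · exact surfFun_genB g i
    · have h1 : ((Fin.castLE (Nat.div_le_self g 2) i : Fin g) : ℕ) = (i : ℕ) := rfl
      have h2 : (((Fin.castLE (Nat.div_le_self g 2) i).rev : Fin g) : ℕ) = g - 1 - (i : ℕ) := by
        rw [Fin.val_rev, h1]; omega
      have hilt : ((Fin.castLE (Nat.div_le_self g 2) i : Fin g) : ℕ) < g / 2 := i.2
      have hnlt : ¬ (((Fin.castLE (Nat.div_le_self g 2) i).rev : Fin g) : ℕ) < g / 2 := by
        rw [h2]; omega
      have h3 : g - 1 - ((((Fin.castLE (Nat.div_le_self g 2) i).rev : Fin g)) : ℕ) < g / 2 := by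
        rw [h2]; omega
      rw [map_mul, surfFun_genA_lt g _ hilt, surfFun_genA_ge g _ hnlt h3]
      have hfin : (⟨g - 1 - ((((Fin.castLE (Nat.div_le_self g 2) i).rev : Fin g)) : ℕ), h3⟩ :
          Fin (g / 2)) = ⟨((Fin.castLE (Nat.div_le_self g 2) i : Fin g) : ℕ), hilt⟩ := by
        have hi2 := i.2
        simp only [Fin.mk.injEq]
        rw [h2, h1]
        omega
      rw [hfin, mul_inv_cancel]
  -- the forward homomorphism
  let φ : PresentedGroup rels →* FreeGroup (Fin (g / 2)) := PresentedGroup.toGroup hrel1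
  -- the backward homomorphism
  let ψ : FreeGroup (Fin (g / 2)) →* PresentedGroup rels :=
    FreeGroup.lift (fun i : Fin (g / 2) =>
      PresentedGroup.of (Sum.inl (Fin.castLE (Nat.div_le_self g 2) i)))
  have hmem : ∀ r ∈ rels, (QuotientGroup.mk r : PresentedGroup rels) = 1 := by
    intro r hr
    exact (QuotientGroup.eq_one_iff r).mpr (Subgroup.subset_normalClosure hr)
  have hofB : ∀ i : Fin g, (PresentedGroup.of (Sum.inr i) : PresentedGroup rels) = 1 := by
    intro i
    exact hmem _ (Or.inl (Or.inr ⟨i, rfl⟩))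
  refine ⟨MonoidHom.toMulEquiv φ ψ ?_ ?_⟩
  · -- ψ ∘ φ = id on PresentedGroup
    ext x
    simp only [MonoidHom.comp_apply, MonoidHom.id_apply]
    rcases x with i | i
    · by_cases h : (i : ℕ) < g / 2
      · have hφ : φ (PresentedGroup.of (Sum.inl i)) = FreeGroup.of (⟨i, h⟩ : Fin (g / 2)) := by
          simp only [φ, PresentedGroup.toGroup.of]
          simp [surfFun, h]
        rw [hφ]
        simp only [ψ, FreeGroup.lift_apply_of]
        rfl
      · have hj : g - 1 - (i : ℕ) < g / 2 := by omega
        set j : Fin (g / 2) := ⟨g - 1 - (i : ℕ), hj⟩ with hjdef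
        have hφ : φ (PresentedGroup.of (Sum.inl i)) = (FreeGroup.of j)⁻¹ := by
          simp only [φ, PresentedGroup.toGroup.of]
          simp [surfFun, h, hj, hjdef]
        rw [hφ, map_inv]
        simp only [ψ, FreeGroup.lift_apply_of]
        have hrev : (Fin.castLE (Nat.div_le_self g 2) j).rev = i := by
          ext
          rw [Fin.val_rev]
          simp only [Fin.castLE, hjdef]
          omega
        have hrel := hmem _ (Or.inr ⟨j, rfl⟩)
        simp only [genA, map_mul, hrev] at hrel
        have hrel' : (PresentedGroup.of (Sum.inl (Fin.castLE (Nat.div_le_self g 2) j)) :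
            PresentedGroup rels) * PresentedGroup.of (Sum.inl i) = 1 := hrel
        exact inv_eq_of_mul_eq_one_right hrel'
    · have hφ : φ (PresentedGroup.of (Sum.inr i)) = 1 := by
        simp only [φ, PresentedGroup.toGroup.of]
        simp [surfFun]
      rw [hφ, map_one, hofB i]
  · -- φ ∘ ψ = id on FreeGroup
    ext i
    simp only [MonoidHom.comp_apply, MonoidHom.id_apply, ψ, FreeGroup.lift_apply_of, φ,
      PresentedGroup.toGroup.of]
    have h : ((Fin.castLE (Nat.div_le_self g 2) i : Fin g) : ℕ) < g / 2 := i.2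
    simp only [surfFun, h, dif_pos]
    rfl
end

section
/- Let g ≥ 2 be an even integer. The presented group with generators a_1, b_1, …, a_g, b_g and relator set consisting of the genus-g surface relator r_g, the commutator a_1 b_1 a_1^{-1} b_1^{-1}, the generators b_2, …, b_{g−1}, the word b_1 b_g, and the words a_i a_{g+1-i} for 1 ≤ i ≤ g/2, is isomorphic to the free product of the free group of rank g/2 − 1 with ℤ × ℤ. -/
open Multiplicative


section listaux
variable {M : Type*} [Monoid M]

theorem aux_prod_last : ∀ (n : ℕ) (w : Fin (n+1) → M), (∀ j : Fin (n+1), (j:ℕ) < n → w j = 1) →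
    ((List.finRange (n+1)).map w).prod = w (Fin.last n) := by
  intro n
  induction n with
  | zero =>
    intro w _
    simp [List.finRange_succ]
  | succ n ih =>
    intro w h
    rw [List.finRange_succ]
    simp only [List.map_cons, List.map_map, List.prod_cons]
    rw [ih (w ∘ Fin.succ) (fun j hj => h j.succ (by simpa using Nat.succ_lt_succ hj))]
    rw [h 0 (Nat.succ_pos n), one_mul]
    rfl

theorem aux_prod_two (n : ℕ) (v : Fin (n+2) → M)
    (h : ∀ j : Fin (n+2), 0 < (j:ℕ) → (j:ℕ) < n+1 → v j = 1) :
    ((List.finRange (n+2)).map v).prod = v 0 * v (Fin.last (n+1)) := by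
  rw [List.finRange_succ]
  simp only [List.map_cons, List.map_map, List.prod_cons]
  congr 1
  rw [aux_prod_last n (v ∘ Fin.succ) (fun j hj => h j.succ (by simp)
    (by simpa using Nat.succ_lt_succ hj))]
  rfl
end listaux

namespace Stmt2Aux

/-- target group -/
abbrev Gt (g : ℕ) := Monoid.Coprod (FreeGroup (Fin (g / 2 - 1))) (Multiplicative (ℤ × ℤ))

def elX (g : ℕ) : Gt g := Monoid.Coprod.inr (ofAdd ((1, 0) : ℤ × ℤ))
def elZ (g : ℕ) : Gt g := Monoid.Coprod.inr (ofAdd ((0, 1) : ℤ × ℤ))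

theorem commXZ (g : ℕ) : Commute (elX g) (elZ g) :=
  (Commute.all (ofAdd ((1,0) : ℤ × ℤ)) (ofAdd ((0,1) : ℤ × ℤ))).map Monoid.Coprod.inr

/-- the relator set -/
def rels (n : ℕ) (hn : 2 ≤ n) : Set (FreeGroup (SurfGen n)) :=
  ({surfRel n}
    ∪ {genA n ⟨0, by have := hn; omega⟩ * genB n ⟨0, by have := hn; omega⟩ *
        (genA n ⟨0, by have := hn; omega⟩)⁻¹ * (genB n ⟨0, by have := hn; omega⟩)⁻¹}
    ∪ Set.range (fun i : Fin (n - 2) => genB n (Fin.castLE (by have := hn; omega) i.succ))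
    ∪ {genB n ⟨0, by have := hn; omega⟩ * genB n ⟨n - 1, by have := hn; omega⟩}
    ∪ Set.range (fun i : Fin (n / 2) =>
        genA n (Fin.castLE (Nat.div_le_self n 2) i) *
          genA n ((Fin.castLE (Nat.div_le_self n 2) i).rev)))


variable (g : ℕ) (hg : 2 ≤ g) (h2 : g % 2 = 0)

def fgen : SurfGen g → Gt g
  | Sum.inl i =>
      if h0 : (i : ℕ) = 0 then elX g
      else if h1 : (i : ℕ) < g / 2 then
        Monoid.Coprod.inl (FreeGroup.of ⟨(i : ℕ) - 1, by omega⟩)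
      else if hl : (i : ℕ) = g - 1 then (elX g)⁻¹
      else (Monoid.Coprod.inl (FreeGroup.of ⟨g - 2 - (i : ℕ), by
        have := i.isLt; omega⟩))⁻¹
  | Sum.inr i =>
      if (i : ℕ) = 0 then elZ g
      else if (i : ℕ) = g - 1 then (elZ g)⁻¹
      else 1

theorem fgen_inl_zero (i : Fin g) (h : (i : ℕ) = 0) : fgen g hg h2 (Sum.inl i) = elX g := by
  simp [fgen, h]

theorem fgen_inl_small (i : Fin g) (h0 : (i : ℕ) ≠ 0) (h1 : (i : ℕ) < g / 2) :
    fgen g hg h2 (Sum.inl i) = Monoid.Coprod.inl (FreeGroup.of ⟨(i : ℕ) - 1, by omega⟩) := by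
  simp [fgen, h0, h1]

theorem fgen_inl_last (i : Fin g) (h : (i : ℕ) = g - 1) :
    fgen g hg h2 (Sum.inl i) = (elX g)⁻¹ := by
  have h0 : g - 1 ≠ 0 := by omega
  have h1 : ¬ g - 1 < g / 2 := by omega
  simp [fgen, h, h0, h1]

theorem fgen_inl_big (i : Fin g) (h1 : g / 2 ≤ (i : ℕ)) (hl : (i : ℕ) ≠ g - 1) :
    fgen g hg h2 (Sum.inl i) =
      (Monoid.Coprod.inl (FreeGroup.of ⟨g - 2 - (i : ℕ), by have := i.isLt; omega⟩))⁻¹ := by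
  have h0 : (i : ℕ) ≠ 0 := by omega
  have h1' : ¬ (i : ℕ) < g / 2 := by omega
  simp [fgen, h0, h1', hl]

theorem fgen_inr_zero (i : Fin g) (h : (i : ℕ) = 0) : fgen g hg h2 (Sum.inr i) = elZ g := by
  simp [fgen, h]

theorem fgen_inr_last (i : Fin g) (h : (i : ℕ) = g - 1) :
    fgen g hg h2 (Sum.inr i) = (elZ g)⁻¹ := by
  have h0 : g - 1 ≠ 0 := by omega
  simp [fgen, h, h0]

theorem fgen_inr_mid (i : Fin g) (h0 : (i : ℕ) ≠ 0) (hl : (i : ℕ) ≠ g - 1) :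
    fgen g hg h2 (Sum.inr i) = 1 := by
  simp [fgen, h0, hl]

/-- `F`, the lift of `fgen` to the free group. -/
noncomputable def F : FreeGroup (SurfGen g) →* Gt g := FreeGroup.lift (fgen g hg h2)

theorem F_genA (i : Fin g) : F g hg h2 (genA g i) = fgen g hg h2 (Sum.inl i) :=
  FreeGroup.lift_apply_of

theorem F_genB (i : Fin g) : F g hg h2 (genB g i) = fgen g hg h2 (Sum.inr i) :=
  FreeGroup.lift_apply_of

theorem F_surfRel : F g hg h2 (surfRel g) = 1 := by
  obtain ⟨m, rfl⟩ : ∃ m, g = m + 2 := ⟨g - 2, by omega⟩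
  have htake : (List.finRange (m+2)).take (m+2) = List.finRange (m+2) := by
    simp [List.take_of_length_le]
  rw [surfRel, cword, htake, map_mul, map_list_prod, map_list_prod, List.map_reverse,
    List.map_reverse, List.prod_reverse_noncomm, List.map_map, List.map_map, List.map_map]
  have e1 : ((List.finRange (m+2)).map
        (((fun x => x⁻¹) ∘ (F (m+2) hg h2 : FreeGroup (SurfGen (m+2)) →* Gt (m+2))) ∘ fun j => (genB (m+2) j)⁻¹)).prod
      = ((List.finRange (m+2)).map (fun j => fgen (m+2) hg h2 (Sum.inr j))).prod := by
    congr 1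
    apply List.map_congr_left
    intro j _
    simp [Function.comp, F_genB]
  rw [e1, aux_prod_two m _ (fun j hj1 hj2 => fgen_inr_mid (m+2) hg h2 j (by omega) (by omega))]
  rw [fgen_inr_zero (m+2) hg h2 0 rfl, fgen_inr_last (m+2) hg h2 (Fin.last (m+1)) (by simp)]
  have e2 : ((List.finRange (m+2)).map
        (F (m+2) hg h2 ∘ fun j => genA (m+2) j * genB (m+2) j * (genA (m+2) j)⁻¹)).prod
      = ((List.finRange (m+2)).map (fun j => fgen (m+2) hg h2 (Sum.inl j) *
          fgen (m+2) hg h2 (Sum.inr j) * (fgen (m+2) hg h2 (Sum.inl j))⁻¹)).prod := by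
    congr 1
    apply List.map_congr_left
    intro j _
    simp [Function.comp, F_genA, F_genB]
  rw [e2, aux_prod_two m _ (fun j hj1 hj2 => by
    rw [fgen_inr_mid (m+2) hg h2 j (by omega) (by omega)]; group)]
  rw [fgen_inr_zero (m+2) hg h2 0 rfl, fgen_inr_last (m+2) hg h2 (Fin.last (m+1)) (by simp),
    fgen_inl_zero (m+2) hg h2 0 rfl, fgen_inl_last (m+2) hg h2 (Fin.last (m+1)) (by simp)]
  have hc := commXZ (m+2)
  have e3 : elX (m+2) * elZ (m+2) * (elX (m+2))⁻¹ = elZ (m+2) := by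
    rw [hc.eq]; group
  have e4 : (elX (m+2))⁻¹ * (elZ (m+2))⁻¹ * ((elX (m+2))⁻¹)⁻¹ = (elZ (m+2))⁻¹ := by
    rw [inv_inv, (hc.inv_inv).eq]; group
  simp only [e3, e4]
  group

theorem F_rels : ∀ r ∈ rels g hg, F g hg h2 r = 1 := by
  intro r hr
  rcases hr with (((hr | hr) | ⟨i, rfl⟩) | hr) | ⟨i, rfl⟩
  · -- surface relator
    rw [Set.mem_singleton_iff] at hr
    subst hr
    exact F_surfRel g hg h2
  · -- commutator
    rw [Set.mem_singleton_iff] at hr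
    subst hr
    simp only [map_mul, map_inv, F_genA, F_genB]
    rw [fgen_inl_zero g hg h2 _ rfl, fgen_inr_zero g hg h2 _ rfl]
    have hc := commXZ g
    rw [hc.eq]
    group
  · -- middle b's
    rw [F_genB, fgen_inr_mid]
    · simp only [Fin.coe_castLE, Fin.val_succ]; omega
    · have := i.isLt; simp only [Fin.coe_castLE, Fin.val_succ]; omega
  · -- b_0 b_{g-1}
    rw [Set.mem_singleton_iff] at hr
    subst hr
    rw [map_mul, F_genB, F_genB, fgen_inr_zero g hg h2 _ rfl,
      fgen_inr_last g hg h2 _ rfl]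
    group
  · -- a_i a_{g-1-i}
    have hiv : ((Fin.castLE (Nat.div_le_self g 2) i : Fin g) : ℕ) = (i : ℕ) := rfl
    have hrev : (((Fin.castLE (Nat.div_le_self g 2) i).rev : Fin g) : ℕ) = g - 1 - (i : ℕ) := by
      simp [Fin.rev]; omega
    rw [map_mul, F_genA, F_genA]
    by_cases h0 : (i : ℕ) = 0
    · rw [fgen_inl_zero g hg h2 _ (by omega), fgen_inl_last g hg h2 _ (by omega)]
      group
    · have hi2 : (i : ℕ) < g / 2 := i.isLt
      rw [fgen_inl_small g hg h2 _ (by omega) (by omega),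
        fgen_inl_big g hg h2 _ (by omega) (by omega)]
      have : (⟨((Fin.castLE (Nat.div_le_self g 2) i : Fin g) : ℕ) - 1, by omega⟩ : Fin (g/2-1))
          = ⟨g - 2 - (((Fin.castLE (Nat.div_le_self g 2) i).rev : Fin g) : ℕ), by omega⟩ := by
        apply Fin.ext
        simp [hiv, hrev]
        omega
      rw [this]
      group

/-! ### The presented group side -/

theorem mk_rel {r : FreeGroup (SurfGen g)} (hr : r ∈ rels g hg) :
    PresentedGroup.mk (rels g hg) r = 1 :=
  (QuotientGroup.eq_one_iff r).2 (Subgroup.subset_normalClosure hr)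

/-- `A = a_1` in the presented group -/
def elA : PresentedGroup (rels g hg) := PresentedGroup.of (Sum.inl ⟨0, by omega⟩)
/-- `B = b_1` in the presented group -/
def elB : PresentedGroup (rels g hg) := PresentedGroup.of (Sum.inr ⟨0, by omega⟩)

theorem commAB : Commute (elA g hg h2) (elB g hg h2) := by
  have h := mk_rel g hg (r := genA g ⟨0, by omega⟩ * genB g ⟨0, by omega⟩ *
      (genA g ⟨0, by omega⟩)⁻¹ * (genB g ⟨0, by omega⟩)⁻¹) (by
    left; left; left; right; rfl)
  simp only [map_mul, map_inv] at h
  have h' : elA g hg h2 * elB g hg h2 * (elA g hg h2)⁻¹ * (elB g hg h2)⁻¹ = 1 := h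
  rw [← commutatorElement_def] at h'
  exact commutatorElement_eq_one_iff_commute.mp h'

theorem relB_mid (j : Fin g) (h0 : 0 < (j : ℕ)) (hl : (j : ℕ) < g - 1) :
    (PresentedGroup.of (Sum.inr j) : PresentedGroup (rels g hg)) = 1 := by
  have h := mk_rel g hg (r := genB g j) (by
    left; left; right
    rw [Set.mem_range]
    refine ⟨⟨(j : ℕ) - 1, by omega⟩, ?_⟩
    show genB g (Fin.castLE (by omega) (⟨(j : ℕ) - 1, by omega⟩ : Fin (g-2)).succ) = genB g j
    congr 1
    apply Fin.ext
    simp only [Fin.coe_castLE, Fin.val_succ]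
    omega)
  exact h

theorem relB_last :
    (PresentedGroup.of (Sum.inr ⟨g - 1, by omega⟩) : PresentedGroup (rels g hg))
      = (elB g hg h2)⁻¹ := by
  have h := mk_rel g hg (r := genB g ⟨0, by omega⟩ * genB g ⟨g - 1, by omega⟩) (by
    left; right; rfl)
  simp only [map_mul] at h
  have h' : elB g hg h2 * PresentedGroup.of (Sum.inr ⟨g - 1, by omega⟩) = 1 := h
  exact eq_inv_of_mul_eq_one_right h'

theorem relA_pair (i : Fin g) (hi : (i : ℕ) < g / 2) :
    (PresentedGroup.of (Sum.inl ⟨g - 1 - (i : ℕ), by omega⟩) : PresentedGroup (rels g hg)) =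
      (PresentedGroup.of (Sum.inl i))⁻¹ := by
  have h := mk_rel g hg (r := genA g (Fin.castLE (Nat.div_le_self g 2) ⟨(i : ℕ), hi⟩) *
      genA g ((Fin.castLE (Nat.div_le_self g 2) ⟨(i : ℕ), hi⟩).rev)) (by
    right
    rw [Set.mem_range]
    exact ⟨⟨(i : ℕ), hi⟩, rfl⟩)
  simp only [map_mul] at h
  have e1 : (Fin.castLE (Nat.div_le_self g 2) (⟨(i : ℕ), hi⟩ : Fin (g/2)) : Fin g) = i := by
    apply Fin.ext; simp
  rw [e1] at h
  have e2 : (i.rev : Fin g) = ⟨g - 1 - (i : ℕ), by omega⟩ := by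
    apply Fin.ext; simp [Fin.rev]; omega
  rw [e2] at h
  exact eq_inv_of_mul_eq_one_right h


/-! ### The two homomorphisms -/

noncomputable def Phi : PresentedGroup (rels g hg) →* Gt g :=
  PresentedGroup.toGroup (F_rels g hg h2)

theorem Phi_of (x : SurfGen g) : Phi g hg h2 (PresentedGroup.of x) = fgen g hg h2 x :=
  PresentedGroup.toGroup.of _

noncomputable def phi1 : FreeGroup (Fin (g / 2 - 1)) →* PresentedGroup (rels g hg) :=
  FreeGroup.lift (fun i => PresentedGroup.of (Sum.inl ⟨(i : ℕ) + 1, by have := i.isLt; omega⟩))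

def psi2 : Multiplicative (ℤ × ℤ) →* PresentedGroup (rels g hg) where
  toFun x := elA g hg h2 ^ (toAdd x).1 * elB g hg h2 ^ (toAdd x).2
  map_one' := by simp
  map_mul' x y := by
    simp only [toAdd_mul, Prod.fst_add, Prod.snd_add, zpow_add]
    rw [Commute.mul_mul_mul_comm ((commAB g hg h2).zpow_zpow _ _)]

noncomputable def Psi : Gt g →* PresentedGroup (rels g hg) :=
  Monoid.Coprod.lift (phi1 g hg h2) (psi2 g hg h2)

set_option maxHeartbeats 1000000 in
theorem left_inv : (Psi g hg h2).comp (Phi g hg h2) = MonoidHom.id _ := by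
  apply PresentedGroup.ext
  intro x
  rw [MonoidHom.comp_apply, Phi_of, MonoidHom.id_apply]
  rcases x with i | i
  · by_cases h0 : (i : ℕ) = 0
    · rw [fgen_inl_zero g hg h2 i h0, elX, Psi, Monoid.Coprod.lift_apply_inr]
      show elA g hg h2 ^ ((1 : ℤ), (0 : ℤ)).1 * elB g hg h2 ^ ((1 : ℤ), (0 : ℤ)).2 = _
      simp only [zpow_one, zpow_zero, mul_one]
      rw [elA]
      exact congrArg _ (congrArg _ (Fin.ext (by simpa using h0.symm)))
    · by_cases h1 : (i : ℕ) < g / 2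
      · rw [fgen_inl_small g hg h2 i h0 h1, Psi, Monoid.Coprod.lift_apply_inl, phi1,
          FreeGroup.lift_apply_of]
        exact congrArg _ (congrArg _ (Fin.ext (by
          show (i : ℕ) - 1 + 1 = (i : ℕ); omega)))
      · by_cases hl : (i : ℕ) = g - 1
        · rw [fgen_inl_last g hg h2 i hl, map_inv, elX, Psi, Monoid.Coprod.lift_apply_inr]
          have e : psi2 g hg h2 (ofAdd ((1, 0) : ℤ × ℤ)) = elA g hg h2 := by
            show elA g hg h2 ^ ((1 : ℤ), (0 : ℤ)).1 * elB g hg h2 ^ ((1 : ℤ), (0 : ℤ)).2 = _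
            simp
          rw [e]
          have hi : i = ⟨g - 1, by omega⟩ := Fin.ext hl
          have hrel := relA_pair g hg h2 ⟨0, by omega⟩ (by
            show (0 : ℕ) < g / 2; omega)
          rw [hi, elA, ← hrel]
          rfl
        · rw [fgen_inl_big g hg h2 i (by omega) hl, map_inv, Psi,
            Monoid.Coprod.lift_apply_inl, phi1, FreeGroup.lift_apply_of]
          have := relA_pair g hg h2 ⟨g - 1 - (i : ℕ), by have := i.isLt; omega⟩
            (by show g - 1 - (i : ℕ) < g / 2; have := i.isLt; omega)
          have eidx : (⟨g - 2 - (i : ℕ) + 1, by have := i.isLt; omega⟩ : Fin g)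
              = ⟨g - 1 - (i : ℕ), by have := i.isLt; omega⟩ := Fin.ext (by
            show g - 2 - (i : ℕ) + 1 = g - 1 - (i : ℕ); have := i.isLt; omega)
          have eidx2 : (⟨g - 1 - (g - 1 - (i : ℕ)), by have := i.isLt; omega⟩ : Fin g) = i :=
            Fin.ext (by show g - 1 - (g - 1 - (i : ℕ)) = (i : ℕ); have := i.isLt; omega)
          rw [show (⟨((⟨g - 2 - (i : ℕ), by have := i.isLt; omega⟩ : Fin (g/2-1)) : ℕ) + 1,
              by have := i.isLt; omega⟩ : Fin g) = ⟨g - 1 - (i : ℕ), by have := i.isLt; omega⟩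
            from Fin.ext (by show g - 2 - (i : ℕ) + 1 = g - 1 - (i : ℕ); have := i.isLt; omega)]
          rw [← this, eidx2]
  · by_cases h0 : (i : ℕ) = 0
    · rw [fgen_inr_zero g hg h2 i h0, elZ, Psi, Monoid.Coprod.lift_apply_inr]
      show elA g hg h2 ^ ((0 : ℤ), (1 : ℤ)).1 * elB g hg h2 ^ ((0 : ℤ), (1 : ℤ)).2 = _
      simp only [zpow_one, zpow_zero, one_mul]
      rw [elB]
      exact congrArg _ (congrArg _ (Fin.ext (by simpa using h0.symm)))
    · by_cases hl : (i : ℕ) = g - 1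
      · rw [fgen_inr_last g hg h2 i hl, map_inv, elZ, Psi, Monoid.Coprod.lift_apply_inr]
        have e : psi2 g hg h2 (ofAdd ((0, 1) : ℤ × ℤ)) = elB g hg h2 := by
          show elA g hg h2 ^ ((0 : ℤ), (1 : ℤ)).1 * elB g hg h2 ^ ((0 : ℤ), (1 : ℤ)).2 = _
          simp
        have hi : i = ⟨g - 1, by omega⟩ := Fin.ext hl
        rw [hi, e, ← relB_last g hg h2]
      · rw [fgen_inr_mid g hg h2 i h0 hl, map_one]
        exact (relB_mid g hg i (by omega) (by have := i.isLt; omega)).symm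

theorem right_inv : (Phi g hg h2).comp (Psi g hg h2) = MonoidHom.id _ := by
  apply Monoid.Coprod.hom_ext
  · apply FreeGroup.ext_hom
    intro k
    rw [MonoidHom.comp_apply, MonoidHom.comp_apply, MonoidHom.comp_apply, MonoidHom.id_apply]
    rw [show (Monoid.Coprod.inl (FreeGroup.of k) : Gt g) = Monoid.Coprod.inl (FreeGroup.of k)
      from rfl]
    rw [Psi, Monoid.Coprod.lift_apply_inl, phi1, FreeGroup.lift_apply_of, Phi_of]
    rw [fgen_inl_small g hg h2 _ (by simp) (by have := k.isLt; simp; omega)]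
    exact congrArg _ (congrArg _ (Fin.ext (by simp)))
  · apply MonoidHom.ext
    intro x
    rw [MonoidHom.comp_apply, MonoidHom.comp_apply, MonoidHom.comp_apply, MonoidHom.id_apply]
    rw [Psi, Monoid.Coprod.lift_apply_inr]
    have e : psi2 g hg h2 x = elA g hg h2 ^ (toAdd x).1 * elB g hg h2 ^ (toAdd x).2 := rfl
    rw [e, map_mul, map_zpow, map_zpow, elA, elB, Phi_of, Phi_of,
      fgen_inl_zero g hg h2 _ rfl, fgen_inr_zero g hg h2 _ rfl, elX, elZ,
      ← map_zpow (Monoid.Coprod.inr : Multiplicative (ℤ × ℤ) →* Gt g),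
      ← map_zpow (Monoid.Coprod.inr : Multiplicative (ℤ × ℤ) →* Gt g), ← map_mul]
    congr 1
    apply Multiplicative.toAdd.injective
    simp [Prod.ext_iff, ← ofAdd_zsmul]

include h2 in
theorem main : Nonempty (PresentedGroup (rels g hg) ≃* Gt g) :=
  ⟨MonoidHom.toMulEquiv (Phi g hg h2) (Psi g hg h2) (left_inv g hg h2) (right_inv g hg h2)⟩

end Stmt2Aux


/-- for even `g ≥ 2`, the presented group
`⟨a_1, b_1, …, a_g, b_g ∣ r_g, a_1 b_1 a_1⁻¹ b_1⁻¹, b_2, …, b_{g-1}, b_1 b_g,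
a_i a_{g+1-i} (1 ≤ i ≤ g/2)⟩` is isomorphic to the free product of the free group of
rank `g/2 - 1` with `ℤ × ℤ`. -/
theorem stmt2 (g : ℕ) (hg : 2 ≤ g) (heven : Even g) :
    Nonempty (PresentedGroup
      (({surfRel g}
        ∪ {genA g ⟨0, by omega⟩ * genB g ⟨0, by omega⟩ *
            (genA g ⟨0, by omega⟩)⁻¹ * (genB g ⟨0, by omega⟩)⁻¹}
        ∪ Set.range (fun i : Fin (g - 2) => genB g (Fin.castLE (by omega) i.succ))
        ∪ {genB g ⟨0, by omega⟩ * genB g ⟨g - 1, by omega⟩}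
        ∪ Set.range (fun i : Fin (g / 2) =>
            genA g (Fin.castLE (Nat.div_le_self g 2) i) *
              genA g ((Fin.castLE (Nat.div_le_self g 2) i).rev))) : Set (FreeGroup (SurfGen g)))
      ≃* Monoid.Coprod (FreeGroup (Fin (g / 2 - 1))) (Multiplicative (ℤ × ℤ))) := by
  exact Stmt2Aux.main g hg (Nat.even_iff.mp heven)
end

section
/- Let g ≥ 3 be an odd integer. The presented group with generators a_1, b_1, …, a_g, b_g and relator set consisting of the genus-g surface relator r_g, the commutator a_1 b_1 a_1^{-1} b_1^{-1}, the generators b_2, …, b_{g−1}, the word b_1 b_g, the words a_i a_{g+1-i} for 1 ≤ i ≤ (g−1)/2, and the generator a_{(g+1)/2}, is isomorphic to the free product of the free group of rank (g−3)/2 with ℤ × ℤ. -/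
namespace Stmt3Aux

open Monoid

abbrev T (g : ℕ) := Monoid.Coprod (FreeGroup (Fin ((g - 3) / 2))) (Multiplicative (ℤ × ℤ))

def xx : Multiplicative (ℤ × ℤ) := Multiplicative.ofAdd (1, 0)
def yy : Multiplicative (ℤ × ℤ) := Multiplicative.ofAdd (0, 1)

variable (g : ℕ)

def fgen (hg : 3 ≤ g) (ho : g % 2 = 1) : SurfGen g → T g
  | .inl i =>
      if h1 : i.val = 0 then Coprod.inr xx
      else if h2 : i.val ≤ (g - 3) / 2 then
        Coprod.inl (FreeGroup.of ⟨i.val - 1, by omega⟩)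
      else if h3 : 2 * i.val + 1 = g then 1
      else if h4 : i.val = g - 1 then Coprod.inr xx⁻¹
      else (Coprod.inl (FreeGroup.of
        (⟨g - 2 - i.val, by have := i.isLt; omega⟩ : Fin ((g - 3) / 2))))⁻¹
  | .inr i =>
      if i.val = 0 then Coprod.inr yy
      else if i.val = g - 1 then Coprod.inr yy⁻¹
      else 1

variable (hg : 3 ≤ g) (ho : g % 2 = 1)

def F : FreeGroup (SurfGen g) →* T g := FreeGroup.lift (fgen g hg ho)

lemma cword_zero : cword g 0 = 1 := by simp [cword]

lemma cword_succ (i : ℕ) (h : i < g) :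
    cword g (i + 1) = (genB g ⟨i, h⟩)⁻¹ * cword g i *
      (genA g ⟨i, h⟩ * genB g ⟨i, h⟩ * (genA g ⟨i, h⟩)⁻¹) := by
  unfold cword
  have hget : (List.finRange g)[i]? = some ⟨i, h⟩ := by
    rw [List.getElem?_eq_getElem (by simpa using h)]
    simp
  rw [List.take_succ, hget]
  simp [mul_assoc]

lemma commFab (i : Fin g) :
    Commute (F g hg ho (genA g i)) (F g hg ho (genB g i)) := by
  have hb : F g hg ho (genB g i) = if i.val = 0 then Coprod.inr yy
      else if i.val = g - 1 then Coprod.inr yy⁻¹ else 1 := by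
    simp [F, genB, fgen]
  by_cases h0 : i.val = 0
  · have ha : F g hg ho (genA g i) = Coprod.inr xx := by
      simp [F, genA, fgen, h0]
    rw [ha, hb, if_pos h0]
    exact (Commute.all xx yy).map _
  · by_cases h1 : i.val = g - 1
    · have ha : F g hg ho (genA g i) = Coprod.inr xx⁻¹ := by
        simp only [F, genA, FreeGroup.lift_apply_of, fgen]
        rw [dif_neg h0, dif_neg (by omega), dif_neg (by omega), dif_pos h1]
      rw [ha, hb, if_neg h0, if_pos h1]
      exact (Commute.all xx⁻¹ yy⁻¹).map _
    · rw [hb, if_neg h0, if_neg h1]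
      exact Commute.one_right _

lemma F_cword : ∀ i, i ≤ g → F g hg ho (cword g i) = 1 := by
  intro i
  induction i with
  | zero => intro _; rw [cword_zero]; simp
  | succ n ih =>
    intro hn
    have h : n < g := by omega
    rw [cword_succ g n h, map_mul, map_mul, map_mul, map_mul, map_inv, map_inv,
      ih (by omega)]
    have hc := commFab g hg ho ⟨n, h⟩
    rw [hc.eq]
    group

end Stmt3Aux

namespace Stmt3Aux

open Monoid

variable {g : ℕ}

lemma hp0 (g : ℕ) (hg : 3 ≤ g) : 0 < g := by omega
lemma hp1 (g : ℕ) (hg : 3 ≤ g) : g - 2 + 1 ≤ g := by omega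
lemma hp2 (g : ℕ) (hg : 3 ≤ g) : g - 1 < g := by omega
lemma hp3 (g : ℕ) (hg : 3 ≤ g) : (g - 1) / 2 ≤ g := by omega
lemma hp4 (g : ℕ) (hg : 3 ≤ g) : (g + 1) / 2 - 1 < g := by omega

def rels (g : ℕ) (hg : 3 ≤ g) : Set (FreeGroup (SurfGen g)) :=
  ({surfRel g}
    ∪ {genA g ⟨0, hp0 g hg⟩ * genB g ⟨0, hp0 g hg⟩ *
        (genA g ⟨0, hp0 g hg⟩)⁻¹ * (genB g ⟨0, hp0 g hg⟩)⁻¹}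
    ∪ Set.range (fun i : Fin (g - 2) => genB g (Fin.castLE (hp1 g hg) i.succ))
    ∪ {genB g ⟨0, hp0 g hg⟩ * genB g ⟨g - 1, hp2 g hg⟩}
    ∪ Set.range (fun i : Fin ((g - 1) / 2) =>
        genA g (Fin.castLE (hp3 g hg) i) *
          genA g ((Fin.castLE (hp3 g hg : (g - 1) / 2 ≤ g) i).rev))
    ∪ {genA g ⟨(g + 1) / 2 - 1, hp4 g hg⟩})

variable (g)

lemma F_rels (hg : 3 ≤ g) (ho : g % 2 = 1) :
    ∀ r ∈ rels g hg, FreeGroup.lift (fgen g hg ho) r = 1 := by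
  have hFa0 : F g hg ho (genA g ⟨0, by omega⟩) = Coprod.inr xx := by
    simp [F, genA, fgen]
  have hFb0 : F g hg ho (genB g ⟨0, by omega⟩) = Coprod.inr yy := by
    simp [F, genB, fgen]
  have hFbg : F g hg ho (genB g ⟨g - 1, by omega⟩) = Coprod.inr yy⁻¹ := by
    simp only [F, genB, FreeGroup.lift_apply_of, fgen]
    rw [if_neg (by omega)]
    simp
  intro r hr
  rcases hr with ((((hr | hr) | hr) | hr) | hr) | hr
  · -- surface relator
    rw [Set.mem_singleton_iff] at hr
    subst hr
    exact F_cword g hg ho g le_rfl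
  · -- commutator
    rw [Set.mem_singleton_iff] at hr
    subst hr
    show F g hg ho _ = 1
    rw [map_mul, map_mul, map_mul, map_inv, map_inv, hFa0, hFb0]
    rw [← map_inv, ← map_inv, ← map_mul, ← map_mul, ← map_mul]
    rw [mul_comm xx yy]
    simp
  · -- middle b's
    obtain ⟨i, rfl⟩ := hr
    show F g hg ho _ = 1
    simp only [F, genB, FreeGroup.lift_apply_of, fgen]
    rw [if_neg, if_neg]
    · have := i.isLt
      simp only [Fin.coe_castLE, Fin.val_succ]
      omega
    · simp only [Fin.coe_castLE, Fin.val_succ]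
      omega
  · -- b1 bg
    rw [Set.mem_singleton_iff] at hr
    subst hr
    show F g hg ho _ = 1
    rw [map_mul, hFb0, hFbg]
    simp
  · -- a pairs
    obtain ⟨i, rfl⟩ := hr
    have hi := i.isLt
    show F g hg ho _ = 1
    rw [map_mul]
    by_cases h0 : i.val = 0
    · have h1 : F g hg ho (genA g (Fin.castLE (by omega) i)) = Coprod.inr xx := by
        simp only [F, genA, FreeGroup.lift_apply_of, fgen]
        rw [dif_pos (by simpa using h0)]
      have h2 : F g hg ho (genA g ((Fin.castLE (by omega : (g-1)/2 ≤ g) i).rev))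
          = Coprod.inr xx⁻¹ := by
        simp only [F, genA, FreeGroup.lift_apply_of, fgen]
        rw [dif_neg, dif_neg, dif_neg, dif_pos]
        all_goals simp only [Fin.val_rev, Fin.coe_castLE]; omega
      rw [h1, h2]; simp
    · have h1 : F g hg ho (genA g (Fin.castLE (by omega) i)) =
          Coprod.inl (FreeGroup.of ⟨(Fin.castLE (by omega : (g-1)/2 ≤ g) i).val - 1,
            by simp only [Fin.coe_castLE]; omega⟩) := by
        simp only [F, genA, FreeGroup.lift_apply_of, fgen]
        rw [dif_neg (by simpa using h0), dif_pos (by simp only [Fin.coe_castLE]; omega)]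
      have h2 : F g hg ho (genA g ((Fin.castLE (by omega : (g-1)/2 ≤ g) i).rev))
          = (Coprod.inl (FreeGroup.of
              (⟨g - 2 - ((Fin.castLE (by omega : (g-1)/2 ≤ g) i).rev).val,
               by simp only [Fin.val_rev, Fin.coe_castLE]; omega⟩ : Fin ((g-3)/2))))⁻¹ := by
        simp only [F, genA, FreeGroup.lift_apply_of, fgen]
        rw [dif_neg, dif_neg, dif_neg, dif_neg]
        all_goals simp only [Fin.val_rev, Fin.coe_castLE]; omega
      rw [h1, h2, mul_inv_eq_one]
      exact congrArg (fun t : Fin ((g-3)/2) => (Coprod.inl (FreeGroup.of t) : T g))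
        (Fin.ext (by simp only [Fin.val_rev, Fin.coe_castLE]; omega))
  · -- middle a
    rw [Set.mem_singleton_iff] at hr
    subst hr
    show F g hg ho _ = 1
    simp only [F, genA, FreeGroup.lift_apply_of, fgen]
    rw [dif_neg (by omega), dif_neg (by omega), dif_pos (by omega)]

end Stmt3Aux

namespace Stmt3Aux

open Monoid

def rel_one (g : ℕ) (hg : 3 ≤ g) {r : FreeGroup (SurfGen g)} (hr : r ∈ rels g hg) :
    PresentedGroup.mk (rels g hg) r = 1 :=
  (QuotientGroup.eq_one_iff r).mpr (Subgroup.subset_normalClosure hr)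

def AA (g : ℕ) (hg : 3 ≤ g) : PresentedGroup (rels g hg) :=
  PresentedGroup.of (Sum.inl ⟨0, hp0 g hg⟩)
def BB (g : ℕ) (hg : 3 ≤ g) : PresentedGroup (rels g hg) :=
  PresentedGroup.of (Sum.inr ⟨0, hp0 g hg⟩)

lemma commAB (g : ℕ) (hg : 3 ≤ g) : Commute (AA g hg) (BB g hg) := by
  have h := rel_one g hg (r := genA g ⟨0, by omega⟩ * genB g ⟨0, by omega⟩ *
      (genA g ⟨0, by omega⟩)⁻¹ * (genB g ⟨0, by omega⟩)⁻¹)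
    (by left; left; left; left; right; rfl)
  rw [map_mul, map_mul, map_inv, map_inv] at h
  have h' : AA g hg * BB g hg * (AA g hg)⁻¹ * (BB g hg)⁻¹ = 1 := h
  rw [Commute, SemiconjBy]
  have h2 : AA g hg * BB g hg * (AA g hg)⁻¹ = BB g hg := by
    have := mul_inv_eq_one.mp (by rw [← h'])
    rw [this]
  calc AA g hg * BB g hg = (AA g hg * BB g hg * (AA g hg)⁻¹) * AA g hg := by group
  _ = BB g hg * AA g hg := by rw [h2]

def psi2 (g : ℕ) (hg : 3 ≤ g) : Multiplicative (ℤ × ℤ) →* PresentedGroup (rels g hg) :=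
  MonoidHom.mk' (fun z => AA g hg ^ z.toAdd.1 * BB g hg ^ z.toAdd.2) (by
    intro z w
    show AA g hg ^ (z.toAdd.1 + w.toAdd.1) * BB g hg ^ (z.toAdd.2 + w.toAdd.2) = _
    rw [zpow_add, zpow_add]
    exact ((commAB g hg).zpow_zpow _ _).mul_mul_mul_comm _ _)

def psi1 (g : ℕ) (hg : 3 ≤ g) : FreeGroup (Fin ((g - 3) / 2)) →* PresentedGroup (rels g hg) :=
  FreeGroup.lift (fun j => PresentedGroup.of (Sum.inl ⟨j.val + 1, by have := j.isLt; omega⟩))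

def psi (g : ℕ) (hg : 3 ≤ g) : T g →* PresentedGroup (rels g hg) :=
  Coprod.lift (psi1 g hg) (psi2 g hg)

def phi (g : ℕ) (hg : 3 ≤ g) (ho : g % 2 = 1) : PresentedGroup (rels g hg) →* T g :=
  PresentedGroup.toGroup (F_rels g hg ho)

end Stmt3Aux

namespace Stmt3Aux

open Monoid

lemma of_inl_congr (g : ℕ) (hg : 3 ≤ g) {u v : Fin g} (h : u.val = v.val) :
    (PresentedGroup.of (Sum.inl u) : PresentedGroup (rels g hg)) =
      PresentedGroup.of (Sum.inl v) := by
  rw [Fin.ext h]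

lemma of_inr_congr (g : ℕ) (hg : 3 ≤ g) {u v : Fin g} (h : u.val = v.val) :
    (PresentedGroup.of (Sum.inr u) : PresentedGroup (rels g hg)) =
      PresentedGroup.of (Sum.inr v) := by
  rw [Fin.ext h]

lemma of_pair (g : ℕ) (hg : 3 ≤ g) (k : ℕ) (hk : k < (g - 1) / 2) :
    (PresentedGroup.of (Sum.inl ⟨k, by omega⟩) : PresentedGroup (rels g hg)) *
      PresentedGroup.of (Sum.inl ⟨g - 1 - k, by omega⟩) = 1 := by
  have h := rel_one g hg (r := genA g (Fin.castLE (by omega) ⟨k, hk⟩) *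
      genA g ((Fin.castLE (by omega : (g - 1) / 2 ≤ g) ⟨k, hk⟩).rev))
    (Or.inl (Or.inr ⟨⟨k, hk⟩, rfl⟩))
  rw [map_mul] at h
  calc (PresentedGroup.of (Sum.inl ⟨k, by omega⟩) : PresentedGroup (rels g hg)) *
      PresentedGroup.of (Sum.inl ⟨g - 1 - k, by omega⟩)
      = PresentedGroup.of (Sum.inl (Fin.castLE (by omega) ⟨k, hk⟩)) *
        PresentedGroup.of (Sum.inl ((Fin.castLE (by omega : (g - 1) / 2 ≤ g) ⟨k, hk⟩).rev)) := by
        rw [of_inl_congr g hg (u := (⟨k, by omega⟩ : Fin g))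
            (v := Fin.castLE (by omega) ⟨k, hk⟩)
            (by simp only [Fin.val_mk, Fin.coe_castLE]),
          of_inl_congr g hg (u := (⟨g - 1 - k, by omega⟩ : Fin g))
            (v := (Fin.castLE (by omega : (g - 1) / 2 ≤ g) ⟨k, hk⟩).rev)
            (by simp only [Fin.val_mk, Fin.val_rev, Fin.coe_castLE]; omega)]
    _ = 1 := h

lemma of_mid (g : ℕ) (hg : 3 ≤ g) (ho : g % 2 = 1) {i : Fin g} (h : 2 * i.val + 1 = g) :
    (PresentedGroup.of (Sum.inl i) : PresentedGroup (rels g hg)) = 1 := by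
  have hh := rel_one g hg (r := genA g ⟨(g + 1) / 2 - 1, by omega⟩) (Or.inr rfl)
  rw [of_inl_congr g hg (v := ⟨(g + 1) / 2 - 1, by omega⟩) (by simp; omega)]
  exact hh

lemma of_bmid (g : ℕ) (hg : 3 ≤ g) {i : Fin g} (h1 : i.val ≠ 0) (h2 : i.val ≠ g - 1) :
    (PresentedGroup.of (Sum.inr i) : PresentedGroup (rels g hg)) = 1 := by
  have hi := i.isLt
  have hh := rel_one g hg
    (r := genB g (Fin.castLE (by omega) (Fin.succ (⟨i.val - 1, by omega⟩ : Fin (g - 2)))))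
    (Or.inl (Or.inl (Or.inl (Or.inr ⟨⟨i.val - 1, by omega⟩, rfl⟩))))
  rw [of_inr_congr g hg (v := Fin.castLE (by omega) (Fin.succ (⟨i.val - 1, by omega⟩ : Fin (g - 2))))
    (by simp only [Fin.coe_castLE, Fin.val_succ, Fin.val_mk]; omega)]
  exact hh

lemma of_b1bg (g : ℕ) (hg : 3 ≤ g) :
    (PresentedGroup.of (Sum.inr ⟨0, hp0 g hg⟩) : PresentedGroup (rels g hg)) *
      PresentedGroup.of (Sum.inr ⟨g - 1, hp2 g hg⟩) = 1 := by
  have h := rel_one g hg (r := genB g ⟨0, by omega⟩ * genB g ⟨g - 1, by omega⟩)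
    (Or.inl (Or.inl (Or.inr rfl)))
  rw [map_mul] at h
  exact h

lemma phi_psi (g : ℕ) (hg : 3 ≤ g) (ho : g % 2 = 1) :
    (phi g hg ho).comp (psi g hg) = MonoidHom.id (T g) := by
  apply Coprod.hom_ext
  · apply FreeGroup.ext_hom
    intro j
    have hj := j.isLt
    show phi g hg ho (psi g hg (Coprod.inl (FreeGroup.of j))) = Coprod.inl (FreeGroup.of j)
    rw [psi, Coprod.lift_apply_inl, psi1, FreeGroup.lift_apply_of, phi, PresentedGroup.toGroup.of]
    show fgen g hg ho (Sum.inl ⟨j.val + 1, _⟩) = _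
    rw [fgen]
    rw [dif_neg (by simp only [Fin.val_mk]; omega), dif_pos (by simp only [Fin.val_mk]; omega)]
    exact congrArg (fun t : Fin ((g - 3) / 2) => (Coprod.inl (FreeGroup.of t) : T g))
      (Fin.ext (by simp))
  · apply MonoidHom.ext
    intro z
    show phi g hg ho (psi g hg (Coprod.inr z)) = Coprod.inr z
    rw [psi, Coprod.lift_apply_inr]
    have hz : psi2 g hg z = AA g hg ^ z.toAdd.1 * BB g hg ^ z.toAdd.2 := rfl
    have hA : phi g hg ho (AA g hg) = Coprod.inr xx := by
      rw [AA, phi, PresentedGroup.toGroup.of]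
      show fgen g hg ho (Sum.inl ⟨0, _⟩) = _
      rw [fgen, dif_pos rfl]
    have hB : phi g hg ho (BB g hg) = Coprod.inr yy := by
      rw [BB, phi, PresentedGroup.toGroup.of]
      show fgen g hg ho (Sum.inr ⟨0, _⟩) = _
      rw [fgen, if_pos rfl]
    rw [hz, map_mul, map_zpow, map_zpow, hA, hB, ← map_zpow, ← map_zpow, ← map_mul]
    congr 1
    apply Multiplicative.toAdd.injective
    simp only [toAdd_mul, toAdd_zpow, xx, yy, toAdd_ofAdd]
    obtain ⟨p, q⟩ := z.toAdd
    simp [Prod.ext_iff]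

lemma psi_phi (g : ℕ) (hg : 3 ≤ g) (ho : g % 2 = 1) :
    (psi g hg).comp (phi g hg ho) = MonoidHom.id (PresentedGroup (rels g hg)) := by
  refine PresentedGroup.ext fun s => ?_
  show psi g hg (phi g hg ho (PresentedGroup.of s)) = PresentedGroup.of s
  rw [phi, PresentedGroup.toGroup.of]
  match s with
  | Sum.inl i =>
    have hi := i.isLt
    rw [fgen]
    by_cases h1 : i.val = 0
    · rw [dif_pos h1, psi, Coprod.lift_apply_inr]
      have : psi2 g hg xx = AA g hg ^ (1 : ℤ) * BB g hg ^ (0 : ℤ) := rfl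
      rw [this, zpow_one, zpow_zero, mul_one, AA]
      exact (of_inl_congr g hg (by simp [h1])).symm
    · rw [dif_neg h1]
      by_cases h2 : i.val ≤ (g - 3) / 2
      · rw [dif_pos h2, psi, Coprod.lift_apply_inl, psi1, FreeGroup.lift_apply_of]
        exact of_inl_congr g hg (by simp; omega)
      · rw [dif_neg h2]
        by_cases h3 : 2 * i.val + 1 = g
        · rw [dif_pos h3, map_one]
          exact (of_mid g hg ho h3).symm
        · rw [dif_neg h3]
          by_cases h4 : i.val = g - 1
          · rw [dif_pos h4, psi, Coprod.lift_apply_inr]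
            have : psi2 g hg xx⁻¹ = AA g hg ^ (-1 : ℤ) * BB g hg ^ (0 : ℤ) := rfl
            rw [this, zpow_neg_one, zpow_zero, mul_one, AA]
            have hp := of_pair g hg 0 (by omega)
            rw [of_inl_congr g hg (u := (⟨g - 1 - 0, by omega⟩ : Fin g))
              (v := i) (by simp; omega)] at hp
            exact (inv_eq_of_mul_eq_one_right hp)
          · rw [dif_neg h4, map_inv, psi, Coprod.lift_apply_inl, psi1, FreeGroup.lift_apply_of]
            have hp := of_pair g hg (g - 1 - i.val) (by omega)
            rw [of_inl_congr g hg (u := (⟨g - 1 - (g - 1 - i.val), by omega⟩ : Fin g))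
              (v := i) (by simp; omega)] at hp
            rw [← inv_eq_of_mul_eq_one_right hp]
            exact congrArg (·⁻¹) (of_inl_congr g hg
              (by simp only [Fin.val_mk]; omega))
  | Sum.inr i =>
    have hi := i.isLt
    rw [fgen]
    by_cases h1 : i.val = 0
    · rw [if_pos h1, psi, Coprod.lift_apply_inr]
      have : psi2 g hg yy = AA g hg ^ (0 : ℤ) * BB g hg ^ (1 : ℤ) := rfl
      rw [this, zpow_one, zpow_zero, one_mul, BB]
      exact (of_inr_congr g hg (by simp [h1])).symm
    · rw [if_neg h1]
      by_cases h2 : i.val = g - 1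
      · rw [if_pos h2, psi, Coprod.lift_apply_inr]
        have : psi2 g hg yy⁻¹ = AA g hg ^ (0 : ℤ) * BB g hg ^ (-1 : ℤ) := rfl
        rw [this, zpow_neg_one, zpow_zero, one_mul, BB]
        have hp := of_b1bg g hg
        rw [of_inr_congr g hg (u := (⟨g - 1, by omega⟩ : Fin g)) (v := i) (by simp; omega)] at hp
        exact (inv_eq_of_mul_eq_one_right hp)
      · rw [if_neg h2, map_one]
        exact (of_bmid g hg h1 h2).symm

end Stmt3Aux

/-- for odd `g ≥ 3`, the presented group
`⟨a_1, b_1, …, a_g, b_g ∣ r_g, a_1 b_1 a_1⁻¹ b_1⁻¹, b_2, …, b_{g-1}, b_1 b_g,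
a_i a_{g+1-i} (1 ≤ i ≤ (g-1)/2), a_{(g+1)/2}⟩` is isomorphic to the free product of the
free group of rank `(g-3)/2` with `ℤ × ℤ`. -/
theorem stmt3 (g : ℕ) (hg : 3 ≤ g) (hodd : Odd g) :
    Nonempty (PresentedGroup
      (({surfRel g}
        ∪ {genA g ⟨0, by omega⟩ * genB g ⟨0, by omega⟩ *
            (genA g ⟨0, by omega⟩)⁻¹ * (genB g ⟨0, by omega⟩)⁻¹}
        ∪ Set.range (fun i : Fin (g - 2) => genB g (Fin.castLE (by omega) i.succ))
        ∪ {genB g ⟨0, by omega⟩ * genB g ⟨g - 1, by omega⟩}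
        ∪ Set.range (fun i : Fin ((g - 1) / 2) =>
            genA g (Fin.castLE (by omega) i) *
              genA g ((Fin.castLE (by omega : (g - 1) / 2 ≤ g) i).rev))
        ∪ {genA g ⟨(g + 1) / 2 - 1, by omega⟩}) : Set (FreeGroup (SurfGen g)))
      ≃* Monoid.Coprod (FreeGroup (Fin ((g - 3) / 2))) (Multiplicative (ℤ × ℤ))) := by
  have ho : g % 2 = 1 := Nat.odd_iff.mp hodd
  exact ⟨MonoidHom.toMulEquiv (Stmt3Aux.phi g hg ho) (Stmt3Aux.psi g hg)
    (Stmt3Aux.psi_phi g hg ho) (Stmt3Aux.phi_psi g hg ho)⟩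
end

section
/- Let g ≥ 2 be an even integer. The presented group with generators a_1, b_1, …, a_g, b_g and relator set consisting of the genus-g surface relator r_g, the words c_g and c_{g/2}, the words a_i a_{g+1-i} for 1 ≤ i ≤ g/2, and the words b_i a_{g+1-i} b_{g+1-i} a_{g+1-i}^{-1} for 1 ≤ i ≤ g/2, is isomorphic to the genus-(g/2) surface group, i.e. to the presented group with generators a'_1, b'_1, …, a'_{g/2}, b'_{g/2} and the single relator r_{g/2}. -/
/-! ### Auxiliary definitions -/

namespace Stmt4Aux

/-- The target group: genus-`h` surface group. -/
abbrev TT (h : ℕ) := PresentedGroup ({surfRel h} : Set (FreeGroup (SurfGen h)))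

def al (h : ℕ) (k : Fin h) : TT h := PresentedGroup.of (Sum.inl k)
def be (h : ℕ) (k : Fin h) : TT h := PresentedGroup.of (Sum.inr k)

def PP (h : ℕ) : TT h := ((List.finRange h).map fun k => al h k * be h k * (al h k)⁻¹).prod
def QQ (h : ℕ) : TT h := ((List.finRange h).reverse.map fun k => (be h k)⁻¹).prod

/-- Canonical projection onto a presented group. -/
def mkP {α : Type*} (R : Set (FreeGroup α)) : FreeGroup α →* PresentedGroup R :=
  QuotientGroup.mk' _

lemma mkP_of {α : Type*} (R : Set (FreeGroup α)) (x : α) :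
    mkP R (FreeGroup.of x) = PresentedGroup.of x := rfl

lemma mkP_eq_one {α : Type*} {R : Set (FreeGroup α)} {r : FreeGroup α} (hr : r ∈ R) :
    mkP R r = 1 :=
  (QuotientGroup.eq_one_iff r).mpr (Subgroup.subset_normalClosure hr)

/-- Map on generators defining `φ`. -/
def fmap (g h : ℕ) (hgh : g = h + h) : SurfGen g → TT h :=
  Sum.elim
    (fun i => if hi : (i : ℕ) < h then (al h (Fin.rev ⟨i, hi⟩))⁻¹
      else al h ⟨i - h, by have := i.isLt; omega⟩)
    (fun i => if hi : (i : ℕ) < h then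
        al h (Fin.rev ⟨i, hi⟩) * (be h (Fin.rev ⟨i, hi⟩))⁻¹ * (al h (Fin.rev ⟨i, hi⟩))⁻¹
      else be h ⟨i - h, by have := i.isLt; omega⟩)

def phi (g h : ℕ) (hgh : g = h + h) : FreeGroup (SurfGen g) →* TT h :=
  FreeGroup.lift (fmap g h hgh)

def Dr (g h : ℕ) : FreeGroup (SurfGen g) :=
  (((List.finRange g).drop h).reverse.map fun j => (genB g j)⁻¹).prod

def Dp (g h : ℕ) : FreeGroup (SurfGen g) :=
  (((List.finRange g).drop h).map fun j => genA g j * genB g j * (genA g j)⁻¹).prod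

/-! ### List lemmas -/

lemma take_finRange (g h : ℕ) (hle : h ≤ g) :
    (List.finRange g).take h = (List.finRange h).map (Fin.castLE hle) := by
  apply List.ext_getElem
  · simp [hle]
  · intro n h1 h2
    simp [List.getElem_take, Fin.ext_iff]

lemma drop_finRange (g h : ℕ) (hgh : g = h + h) :
    (List.finRange g).drop h =
      (List.finRange h).map (fun k : Fin h => (⟨k + h, by have := k.isLt; omega⟩ : Fin g)) := by
  apply List.ext_getElem
  · simp; omega
  · intro n h1 h2
    simp [List.getElem_drop, Fin.ext_iff]
    omega

lemma take_finRange_self (h : ℕ) : (List.finRange h).take h = List.finRange h := by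
  simp

lemma cword_self (h : ℕ) : cword h h =
    ((List.finRange h).reverse.map fun j => (genB h j)⁻¹).prod *
    ((List.finRange h).map fun j => genA h j * genB h j * (genA h j)⁻¹).prod := by
  unfold cword; rw [take_finRange_self]

lemma cword_split (g h : ℕ) (hgh : g = h + h) :
    cword g g = Dr g h * cword g h * Dp g h := by
  unfold cword Dr Dp
  have htake : (List.finRange g).take g = List.finRange g := by simp
  rw [htake]
  conv_lhs => rw [← List.take_append_drop h (List.finRange g)]
  simp only [List.map_append, List.reverse_append, List.prod_append]
  group

/-! ### `φ` on generators -/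

section phi
variable (g h : ℕ) (hgh : g = h + h)

lemma phi_genA_lo (i : Fin g) (hi : (i : ℕ) < h) :
    phi g h hgh (genA g i) = (al h (Fin.rev ⟨i, hi⟩))⁻¹ := by
  show FreeGroup.lift (fmap g h hgh) (FreeGroup.of (Sum.inl i)) = _
  rw [FreeGroup.lift_apply_of]
  simp only [fmap, Sum.elim_inl]
  rw [dif_pos hi]

lemma phi_genB_lo (i : Fin g) (hi : (i : ℕ) < h) :
    phi g h hgh (genB g i) =
      al h (Fin.rev ⟨i, hi⟩) * (be h (Fin.rev ⟨i, hi⟩))⁻¹ * (al h (Fin.rev ⟨i, hi⟩))⁻¹ := by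
  show FreeGroup.lift (fmap g h hgh) (FreeGroup.of (Sum.inr i)) = _
  rw [FreeGroup.lift_apply_of]
  simp only [fmap, Sum.elim_inr]
  rw [dif_pos hi]

lemma phi_genA_hi (i : Fin g) (hi : h ≤ (i : ℕ)) :
    phi g h hgh (genA g i) = al h ⟨i - h, by have := i.isLt; omega⟩ := by
  show FreeGroup.lift (fmap g h hgh) (FreeGroup.of (Sum.inl i)) = _
  rw [FreeGroup.lift_apply_of]
  simp only [fmap, Sum.elim_inl]
  rw [dif_neg (by omega)]

lemma phi_genB_hi (i : Fin g) (hi : h ≤ (i : ℕ)) :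
    phi g h hgh (genB g i) = be h ⟨i - h, by have := i.isLt; omega⟩ := by
  show FreeGroup.lift (fmap g h hgh) (FreeGroup.of (Sum.inr i)) = _
  rw [FreeGroup.lift_apply_of]
  simp only [fmap, Sum.elim_inr]
  rw [dif_neg (by omega)]

lemma phi_genA_shift (k : Fin h) :
    phi g h hgh (genA g ⟨(k : ℕ) + h, by have := k.isLt; omega⟩) = al h k := by
  rw [phi_genA_hi g h hgh _ (by simp)]
  congr 1
  ext
  simp

lemma phi_genB_shift (k : Fin h) :
    phi g h hgh (genB g ⟨(k : ℕ) + h, by have := k.isLt; omega⟩) = be h k := by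
  rw [phi_genB_hi g h hgh _ (by simp)]
  congr 1
  ext
  simp

/-! ### `φ` on the relator words -/

lemma phi_cword_h : phi g h hgh (cword g h) = PP h * QQ h := by
  have hle : h ≤ g := by omega
  unfold cword
  rw [take_finRange g h hle, map_mul, map_list_prod, map_list_prod]
  rw [← List.map_reverse, List.finRange_reverse]
  simp only [List.map_map]
  congr 1
  · unfold PP
    congr 1
    apply List.map_congr_left
    intro k _
    simp only [Function.comp_apply]
    rw [map_inv, phi_genB_lo g h hgh _ (by simpa using (Fin.rev k).isLt)]
    have : (⟨((Fin.castLE hle (Fin.rev k)) : ℕ), by simpa using (Fin.rev k).isLt⟩ : Fin h)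
        = Fin.rev k := by ext; simp
    rw [this, Fin.rev_rev]
    group
  · unfold QQ
    rw [List.finRange_reverse, List.map_map]
    congr 1
    apply List.map_congr_left
    intro k _
    simp only [Function.comp_apply]
    have hlt : ((Fin.castLE hle k : Fin g) : ℕ) < h := by simpa using k.isLt
    rw [map_mul, map_mul, map_inv, phi_genA_lo g h hgh _ hlt, phi_genB_lo g h hgh _ hlt]
    have : (⟨((Fin.castLE hle k) : ℕ), hlt⟩ : Fin h) = k := by ext; simp
    rw [this]
    group

lemma phi_Dr : phi g h hgh (Dr g h) = QQ h := by
  unfold Dr QQ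
  rw [drop_finRange g h hgh, map_list_prod, ← List.map_reverse]
  simp only [List.map_map]
  congr 1
  apply List.map_congr_left
  intro k _
  simp only [Function.comp_apply]
  rw [map_inv, phi_genB_shift g h hgh k]

lemma phi_Dp : phi g h hgh (Dp g h) = PP h := by
  unfold Dp PP
  rw [drop_finRange g h hgh, map_list_prod]
  simp only [List.map_map]
  congr 1
  apply List.map_congr_left
  intro k _
  simp only [Function.comp_apply]
  rw [map_mul, map_mul, map_inv, phi_genA_shift g h hgh k, phi_genB_shift g h hgh k]

end phi

/-! ### relations in the target group -/

lemma mkP_surfRel (h : ℕ) : mkP {surfRel h} (surfRel h) = QQ h * PP h := by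
  have e : mkP {surfRel h} (surfRel h) = mkP {surfRel h}
      (((List.finRange h).reverse.map fun j => (genB h j)⁻¹).prod *
        ((List.finRange h).map fun j => genA h j * genB h j * (genA h j)⁻¹).prod) :=
    congrArg _ (cword_self h)
  rw [e, map_mul, map_list_prod, map_list_prod]
  simp only [List.map_map]
  unfold QQ PP
  congr 1

lemma QQ_mul_PP (h : ℕ) : QQ h * PP h = 1 := by
  rw [← mkP_surfRel h]
  exact mkP_eq_one rfl

lemma PP_mul_QQ (h : ℕ) : PP h * QQ h = 1 := by
  have hP : PP h = (QQ h)⁻¹ := eq_inv_of_mul_eq_one_right (QQ_mul_PP h)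
  rw [hP, inv_mul_cancel]

/-! ### `φ` kills all the relators -/

section kill
variable (g h : ℕ) (hgh : g = h + h) (hle : h ≤ g)

lemma phi_cword_h_one : phi g h hgh (cword g h) = 1 := by
  rw [phi_cword_h, PP_mul_QQ]

lemma phi_cword_g_one : phi g h hgh (cword g g) = 1 := by
  rw [cword_split g h hgh, map_mul, map_mul, phi_Dr, phi_Dp, phi_cword_h_one, mul_one,
    QQ_mul_PP]

lemma phi_rel4 (i : Fin h) :
    phi g h hgh (genA g (Fin.castLE hle i) * genA g ((Fin.castLE hle i).rev)) = 1 := by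
  have hlt : ((Fin.castLE hle i : Fin g) : ℕ) < h := by simpa using i.isLt
  have hhi : h ≤ (((Fin.castLE hle i).rev : Fin g) : ℕ) := by
    simp [Fin.val_rev]; omega
  rw [map_mul, phi_genA_lo g h hgh _ hlt, phi_genA_hi g h hgh _ hhi]
  have : (⟨(((Fin.castLE hle i).rev : Fin g) : ℕ) - h, by
      have := ((Fin.castLE hle i).rev).isLt; omega⟩ : Fin h)
      = Fin.rev ⟨((Fin.castLE hle i : Fin g) : ℕ), hlt⟩ := by
    ext; simp [Fin.val_rev]; omega
  rw [this, inv_mul_cancel]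

lemma phi_rel5 (i : Fin h) :
    phi g h hgh (genB g (Fin.castLE hle i) * genA g ((Fin.castLE hle i).rev) *
      genB g ((Fin.castLE hle i).rev) * (genA g ((Fin.castLE hle i).rev))⁻¹) = 1 := by
  have hlt : ((Fin.castLE hle i : Fin g) : ℕ) < h := by simpa using i.isLt
  have hhi : h ≤ (((Fin.castLE hle i).rev : Fin g) : ℕ) := by
    simp [Fin.val_rev]; omega
  have key : (⟨(((Fin.castLE hle i).rev : Fin g) : ℕ) - h, by
      have := ((Fin.castLE hle i).rev).isLt; omega⟩ : Fin h)
      = Fin.rev ⟨((Fin.castLE hle i : Fin g) : ℕ), hlt⟩ := by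
    ext; simp [Fin.val_rev]; omega
  simp only [map_mul, map_inv]
  rw [phi_genB_lo g h hgh _ hlt, phi_genA_hi g h hgh _ hhi, phi_genB_hi g h hgh _ hhi, key]
  group

end kill

/-! ### `ψ` -/

section psi
variable (g h : ℕ) (hgh : g = h + h) (R : Set (FreeGroup (SurfGen g)))

def kmap : SurfGen h → PresentedGroup R :=
  Sum.elim
    (fun k => mkP R (genA g ⟨k + h, by have := k.isLt; omega⟩))
    (fun k => mkP R (genB g ⟨k + h, by have := k.isLt; omega⟩))

def psi : FreeGroup (SurfGen h) →* PresentedGroup R := FreeGroup.lift (kmap g h hgh R)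

lemma psi_ofA (k : Fin h) :
    psi g h hgh R (FreeGroup.of (Sum.inl k)) =
      mkP R (genA g ⟨(k : ℕ) + h, by have := k.isLt; omega⟩) := by
  unfold psi
  rw [FreeGroup.lift_apply_of]
  rfl

lemma psi_ofB (k : Fin h) :
    psi g h hgh R (FreeGroup.of (Sum.inr k)) =
      mkP R (genB g ⟨(k : ℕ) + h, by have := k.isLt; omega⟩) := by
  unfold psi
  rw [FreeGroup.lift_apply_of]
  rfl

lemma psi_surfRel (h1 : cword g g ∈ R) (h2 : cword g h ∈ R) :
    psi g h hgh R (surfRel h) = 1 := by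
  have key : psi g h hgh R (surfRel h) = mkP R (Dr g h) * mkP R (Dp g h) := by
    have e : psi g h hgh R (surfRel h) = psi g h hgh R
        (((List.finRange h).reverse.map fun j => (genB h j)⁻¹).prod *
          ((List.finRange h).map fun j => genA h j * genB h j * (genA h j)⁻¹).prod) :=
      congrArg _ (cword_self h)
    rw [e, map_mul, map_list_prod, map_list_prod]
    unfold Dr Dp
    rw [drop_finRange g h hgh, map_list_prod, map_list_prod, ← List.map_reverse]
    simp only [List.map_map]
    congr 1
  have hsplit := congrArg (mkP R) (cword_split g h hgh)
  rw [map_mul, map_mul, mkP_eq_one h1, mkP_eq_one h2, mul_one] at hsplit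
  rw [key, ← hsplit]

end psi

/-! ### main construction -/

theorem main (g h : ℕ) (hgh : g = h + h) (hle : h ≤ g) (R : Set (FreeGroup (SurfGen g)))
    (hkill : ∀ r ∈ R, phi g h hgh r = 1)
    (h1 : cword g g ∈ R) (h2 : cword g h ∈ R)
    (h4 : ∀ i : Fin h, genA g (Fin.castLE hle i) * genA g ((Fin.castLE hle i).rev) ∈ R)
    (h5 : ∀ i : Fin h, genB g (Fin.castLE hle i) * genA g ((Fin.castLE hle i).rev) *
      genB g ((Fin.castLE hle i).rev) * (genA g ((Fin.castLE hle i).rev))⁻¹ ∈ R) :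
    Nonempty (PresentedGroup R ≃* TT h) := by
  have hkillS : ∀ r ∈ ({surfRel h} : Set (FreeGroup (SurfGen h))),
      FreeGroup.lift (kmap g h hgh R) r = 1 := by
    rintro r rfl
    exact psi_surfRel g h hgh R h1 h2
  let Φ : PresentedGroup R →* TT h := PresentedGroup.toGroup hkill
  let Ψ : TT h →* PresentedGroup R := PresentedGroup.toGroup hkillS
  have hΦmk : ∀ w : FreeGroup (SurfGen g), Φ (mkP R w) = phi g h hgh w := fun _ => rfl
  have hΨmk : ∀ w : FreeGroup (SurfGen h), Ψ (mkP {surfRel h} w) = psi g h hgh R w :=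
    fun _ => rfl
  refine ⟨MonoidHom.toMulEquiv Φ Ψ ?_ ?_⟩
  · apply PresentedGroup.ext
    intro x
    rw [MonoidHom.comp_apply, MonoidHom.id_apply]
    have hofx : (PresentedGroup.of x : PresentedGroup R) = mkP R (FreeGroup.of x) := rfl
    rcases x with i | i
    · by_cases hi : (i : ℕ) < h
      · have hcast : Fin.castLE hle (⟨(i : ℕ), hi⟩ : Fin h) = i := by ext; rfl
        have hrel := mkP_eq_one (h4 ⟨(i : ℕ), hi⟩)
        rw [map_mul, hcast] at hrel
        -- hrel : mkP (genA g i) * mkP (genA g i.rev) = 1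
        rw [hofx, hΦmk,
          show (FreeGroup.of (Sum.inl i) : FreeGroup (SurfGen g)) = genA g i from rfl,
          phi_genA_lo g h hgh i hi, map_inv,
          show al h (Fin.rev ⟨(i : ℕ), hi⟩)
            = mkP {surfRel h} (FreeGroup.of (Sum.inl (Fin.rev ⟨(i : ℕ), hi⟩))) from rfl,
          hΨmk, psi_ofA g h hgh R (Fin.rev ⟨(i : ℕ), hi⟩)]
        have hidx : (⟨((Fin.rev (⟨(i : ℕ), hi⟩ : Fin h)) : ℕ) + h, by
            have := (Fin.rev (⟨(i : ℕ), hi⟩ : Fin h)).isLt; omega⟩ : Fin g) = i.rev := by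
          ext; simp [Fin.val_rev]; omega
        rw [hidx]
        exact (eq_inv_of_mul_eq_one_left hrel).symm
      · rw [hofx, hΦmk,
          show (FreeGroup.of (Sum.inl i) : FreeGroup (SurfGen g)) = genA g i from rfl,
          phi_genA_hi g h hgh i (by omega),
          show al h (⟨(i : ℕ) - h, by have := i.isLt; omega⟩ : Fin h)
            = mkP {surfRel h}
              (FreeGroup.of (Sum.inl (⟨(i : ℕ) - h, by have := i.isLt; omega⟩ : Fin h)))
            from rfl,
          hΨmk, psi_ofA g h hgh R]
        have hidx : (⟨((⟨(i : ℕ) - h, by have := i.isLt; omega⟩ : Fin h) : ℕ) + h, by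
            have := i.isLt; omega⟩ : Fin g) = i := by
          ext; simp; omega
        rw [hidx]
    · by_cases hi : (i : ℕ) < h
      · have hcast : Fin.castLE hle (⟨(i : ℕ), hi⟩ : Fin h) = i := by ext; rfl
        have hrel := mkP_eq_one (h5 ⟨(i : ℕ), hi⟩)
        simp only [map_mul, map_inv, hcast] at hrel
        -- hrel : mkP (genB g i) * mkP (genA g i.rev) * mkP (genB g i.rev) *
        --   (mkP (genA g i.rev))⁻¹ = 1
        rw [hofx, hΦmk,
          show (FreeGroup.of (Sum.inr i) : FreeGroup (SurfGen g)) = genB g i from rfl,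
          phi_genB_lo g h hgh i hi, map_mul, map_mul, map_inv, map_inv,
          show al h (Fin.rev ⟨(i : ℕ), hi⟩)
            = mkP {surfRel h} (FreeGroup.of (Sum.inl (Fin.rev ⟨(i : ℕ), hi⟩))) from rfl,
          show be h (Fin.rev ⟨(i : ℕ), hi⟩)
            = mkP {surfRel h} (FreeGroup.of (Sum.inr (Fin.rev ⟨(i : ℕ), hi⟩))) from rfl,
          hΨmk, hΨmk, psi_ofA g h hgh R (Fin.rev ⟨(i : ℕ), hi⟩),
          psi_ofB g h hgh R (Fin.rev ⟨(i : ℕ), hi⟩)]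
        have hidx : (⟨((Fin.rev (⟨(i : ℕ), hi⟩ : Fin h)) : ℕ) + h, by
            have := (Fin.rev (⟨(i : ℕ), hi⟩ : Fin h)).isLt; omega⟩ : Fin g) = i.rev := by
          ext; simp [Fin.val_rev]; omega
        rw [hidx]
        show mkP R (genA g i.rev) * (mkP R (genB g i.rev))⁻¹ * (mkP R (genA g i.rev))⁻¹
          = mkP R (genB g i)
        have h2' : mkP R (genB g i) *
            (mkP R (genA g i.rev) * mkP R (genB g i.rev) * (mkP R (genA g i.rev))⁻¹) = 1 := by
          rw [← hrel]; group
        rw [eq_inv_of_mul_eq_one_left h2']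
        group
      · rw [hofx, hΦmk,
          show (FreeGroup.of (Sum.inr i) : FreeGroup (SurfGen g)) = genB g i from rfl,
          phi_genB_hi g h hgh i (by omega),
          show be h (⟨(i : ℕ) - h, by have := i.isLt; omega⟩ : Fin h)
            = mkP {surfRel h}
              (FreeGroup.of (Sum.inr (⟨(i : ℕ) - h, by have := i.isLt; omega⟩ : Fin h)))
            from rfl,
          hΨmk, psi_ofB g h hgh R]
        have hidx : (⟨((⟨(i : ℕ) - h, by have := i.isLt; omega⟩ : Fin h) : ℕ) + h, by
            have := i.isLt; omega⟩ : Fin g) = i := by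
          ext; simp; omega
        rw [hidx]
  · apply PresentedGroup.ext
    intro x
    rw [MonoidHom.comp_apply, MonoidHom.id_apply]
    have hofx : (PresentedGroup.of x : TT h) = mkP {surfRel h} (FreeGroup.of x) := rfl
    rcases x with k | k
    · rw [hofx, hΨmk, psi_ofA g h hgh R k, hΦmk, phi_genA_shift g h hgh k]
      rfl
    · rw [hofx, hΨmk, psi_ofB g h hgh R k, hΦmk, phi_genB_shift g h hgh k]
      rfl

end Stmt4Aux

open Stmt4Aux in
/-- for even `g ≥ 2`, the presented group
`⟨a_1, b_1, …, a_g, b_g ∣ r_g, c_g, c_{g/2}, a_i a_{g+1-i} (1 ≤ i ≤ g/2),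
b_i a_{g+1-i} b_{g+1-i} a_{g+1-i}⁻¹ (1 ≤ i ≤ g/2)⟩` is isomorphic to the genus-`(g/2)`
surface group. -/
theorem stmt4 (g : ℕ) (hg : 2 ≤ g) (heven : Even g) :
    Nonempty (PresentedGroup
      (({surfRel g} ∪ {cword g g} ∪ {cword g (g / 2)}
        ∪ Set.range (fun i : Fin (g / 2) =>
            genA g (Fin.castLE (Nat.div_le_self g 2) i) *
              genA g ((Fin.castLE (Nat.div_le_self g 2) i).rev))
        ∪ Set.range (fun i : Fin (g / 2) =>
            genB g (Fin.castLE (Nat.div_le_self g 2) i) *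
              genA g ((Fin.castLE (Nat.div_le_self g 2) i).rev) *
              genB g ((Fin.castLE (Nat.div_le_self g 2) i).rev) *
              (genA g ((Fin.castLE (Nat.div_le_self g 2) i).rev))⁻¹)) :
        Set (FreeGroup (SurfGen g)))
      ≃* PresentedGroup ({surfRel (g / 2)} : Set (FreeGroup (SurfGen (g / 2))))) := by
  set h := g / 2 with hh
  have hgh : g = h + h := by
    obtain ⟨m, hm⟩ := heven
    omega
  have hle : h ≤ g := Nat.div_le_self g 2
  apply main g h hgh hle
  · -- hkill
    intro r hr
    simp only [Set.mem_union, Set.mem_singleton_iff, Set.mem_range] at hr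
    obtain ((((rfl | rfl) | rfl) | ⟨i, rfl⟩) | ⟨i, rfl⟩) := hr
    · exact phi_cword_g_one g h hgh
    · exact phi_cword_g_one g h hgh
    · exact phi_cword_h_one g h hgh
    · exact phi_rel4 g h hgh hle i
    · exact phi_rel5 g h hgh hle i
  · -- h1 : cword g g ∈ R
    left; left; left; right; rfl
  · -- h2 : cword g h ∈ R
    left; left; right; rfl
  · -- h4
    intro i
    left; right
    exact ⟨i, rfl⟩
  · -- h5
    intro i
    right
    exact ⟨i, rfl⟩
end

section
/- Let G be a group, let g ≥ 1 be an integer, and let x, y ∈ G satisfy y^{2g+2} = 1 and (xy)^{2g+1} = y^{2g+2}. Define σ_i = y^{i−1} x y^{1−i} for 1 ≤ i ≤ 2g+1. Then (σ_1 σ_2 ⋯ σ_{2g+1})(σ_{2g+1} ⋯ σ_2 σ_1) = (y^{−1} x)^{2g+1}. -/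
private lemma fwd {G : Type*} [Group G] (x y : G) :
    ∀ n : ℕ, ((List.range n).map fun j => y ^ j * x * (y ^ j)⁻¹).prod
      = (x * y) ^ n * (y ^ n)⁻¹ := by
  intro n
  induction n with
  | zero => simp
  | succ n ih =>
      rw [List.range_succ, List.map_append, List.prod_append, ih]
      simp [pow_succ]
      group

private lemma bwd {G : Type*} [Group G] (x y : G) :
    ∀ n : ℕ, ((List.range (n + 1)).reverse.map fun j => y ^ j * x * (y ^ j)⁻¹).prod
      = y ^ n * (x * y⁻¹) ^ n * x := by
  intro n
  induction n with
  | zero => simp [List.range_succ]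
  | succ n ih =>
      rw [List.range_succ, List.reverse_append, List.map_append, List.prod_append, ih,
        pow_succ' (x * y⁻¹)]
      have h : ∀ z : G, (y ^ (n + 1))⁻¹ * (y ^ n * z) = y⁻¹ * z := by
        intro z; rw [pow_succ]; group
      simp [mul_assoc, h]

/-- if `y^{2g+2} = 1` and `(xy)^{2g+1} = y^{2g+2}` in a group `G`, with
`σ_i = y^{i-1} x y^{1-i}` for `1 ≤ i ≤ 2g+1` (below `σ_{j+1} = y^j * x * (y^j)⁻¹` in
`0`-based indexing), then `(σ_1 σ_2 ⋯ σ_{2g+1})(σ_{2g+1} ⋯ σ_2 σ_1) = (y⁻¹ x)^{2g+1}`. -/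
theorem stmt7 (G : Type*) [Group G] (g : ℕ) (hg : 1 ≤ g) (x y : G)
    (h1 : y ^ (2 * g + 2) = 1) (h2 : (x * y) ^ (2 * g + 1) = y ^ (2 * g + 2)) :
    ((List.range (2 * g + 1)).map fun j => y ^ j * x * (y ^ j)⁻¹).prod *
        ((List.range (2 * g + 1)).reverse.map fun j => y ^ j * x * (y ^ j)⁻¹).prod
      = (y⁻¹ * x) ^ (2 * g + 1) := by
  have hxy : (x * y) ^ (2 * g + 1) = 1 := h2.trans h1
  rw [fwd, bwd, hxy]
  -- goal: 1 * (y^(2g+1))⁻¹ * (y^(2g) * (x*y⁻¹)^(2g) * x) = (y⁻¹*x)^(2g+1)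
  have key : (y⁻¹ * x) ^ (2 * g) * y⁻¹ = y⁻¹ * (x * y⁻¹) ^ (2 * g) := by
    induction (2 * g) with
    | zero => simp
    | succ n ih =>
        rw [pow_succ' (y⁻¹ * x), mul_assoc, ih, pow_succ' (x * y⁻¹)]
        simp [mul_assoc]
  calc 1 * (y ^ (2 * g + 1))⁻¹ * (y ^ (2 * g) * (x * y⁻¹) ^ (2 * g) * x)
      = y⁻¹ * (x * y⁻¹) ^ (2 * g) * x := by
        rw [pow_succ]; group
    _ = (y⁻¹ * x) ^ (2 * g) * y⁻¹ * x := by rw [key]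
    _ = (y⁻¹ * x) ^ (2 * g + 1) := by rw [pow_succ, mul_assoc]
end

section
/- Let G be a group, let g ≥ 1 be an integer, and let x, y ∈ G satisfy y^{2g+2} = 1 and (xy)^{2g+1} = y^{2g+2}. Define σ_i = y^{i−1} x y^{1−i} for 1 ≤ i ≤ 2g+1, and let P = (σ_1 σ_2 ⋯ σ_{2g+1})(σ_{2g+1} ⋯ σ_2 σ_1). Then the commutator [P, σ_1] = P σ_1 P^{−1} σ_1^{−1} equals (y^{−1} x)^{2g+1} (y x^{−1})^{2g+1}. -/
lemma fwd_prod {G : Type*} [Group G] (x y : G) (n : ℕ) :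
    ((List.range n).map fun j => y ^ j * x * (y ^ j)⁻¹).prod = (x * y) ^ n * (y ^ n)⁻¹ := by
  induction n with
  | zero => simp
  | succ n ih =>
    rw [List.range_succ, List.map_append, List.prod_append, ih]
    simp [pow_succ]
    group

lemma rev_prod {G : Type*} [Group G] (x y : G) (n : ℕ) :
    ((List.range n).reverse.map fun j => y ^ j * x * (y ^ j)⁻¹).prod
      = y ^ n * (y⁻¹ * x) ^ n := by
  induction n with
  | zero => simp
  | succ n ih =>
    rw [List.range_succ, List.reverse_append, List.map_append, List.prod_append, ih]
    simp only [List.reverse_singleton, List.map_cons, List.map_nil, List.prod_cons,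
      List.prod_nil, mul_one]
    rw [pow_succ y, pow_succ' (y⁻¹ * x)]
    simp [mul_assoc]

/-- if `y^{2g+2} = 1` and `(xy)^{2g+1} = y^{2g+2}` in a group `G`, with
`σ_i = y^{i-1} x y^{1-i}` for `1 ≤ i ≤ 2g+1` (below `σ_{j+1} = y^j * x * (y^j)⁻¹` in
`0`-based indexing, so `σ_1 = x`) and `P = (σ_1 σ_2 ⋯ σ_{2g+1})(σ_{2g+1} ⋯ σ_2 σ1)`, then
`[P, σ_1] = P σ_1 P⁻¹ σ_1⁻¹ = (y⁻¹ x)^{2g+1} (y x⁻¹)^{2g+1}`. -/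
theorem stmt8 (G : Type*) [Group G] (g : ℕ) (hg : 1 ≤ g) (x y : G)
    (h1 : y ^ (2 * g + 2) = 1) (h2 : (x * y) ^ (2 * g + 1) = y ^ (2 * g + 2))
    (P : G)
    (hP : P = ((List.range (2 * g + 1)).map fun j => y ^ j * x * (y ^ j)⁻¹).prod *
        ((List.range (2 * g + 1)).reverse.map fun j => y ^ j * x * (y ^ j)⁻¹).prod) :
    P * x * P⁻¹ * x⁻¹ = (y⁻¹ * x) ^ (2 * g + 1) * (y * x⁻¹) ^ (2 * g + 1) := by
  rw [fwd_prod, rev_prod, h2, h1] at hP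
  have hP' : P = (y⁻¹ * x) ^ (2 * g + 1) := by rw [hP]; group
  have hinv : ((y⁻¹ * x) ^ (2 * g + 1))⁻¹ = (x⁻¹ * y) ^ (2 * g + 1) := by
    rw [← inv_pow, mul_inv_rev, inv_inv]
  have hc : x * ((y⁻¹ * x) ^ (2 * g + 1))⁻¹ * x⁻¹ = (y * x⁻¹) ^ (2 * g + 1) := by
    rw [hinv, ← conj_pow]; congr 1; group
  rw [hP', ← hc]; group
end

section
/- Let n ≥ 3. The presented group with generators σ_1, …, σ_{n−1} and relators σ_i σ_j σ_i^{−1} σ_j^{−1} for 1 ≤ i < j − 1 ≤ n − 2 and σ_i σ_{i+1} σ_i σ_{i+1}^{−1} σ_i^{−1} σ_{i+1}^{−1} for 1 ≤ i ≤ n − 2 (the n-strand braid group B_n) is isomorphic to the presented group with generators x, y and relators x y^k x y^{−k} x^{−1} y^k x^{−1} y^{−k} for 2 ≤ k ≤ n − 2, x y x y^{−1} x y x^{−1} y^{−1} x^{−1} y x^{−1} y^{−1}, and (xy)^{n−1} y^{−n}, via an isomorphism sending σ_i to y^{i−1} x y^{1−i} for each 1 ≤ i ≤ n − 1. -/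
/-- The generator `σ_{i+1}` (`0`-based indexing) as an element of the free group on `Fin N`. -/
def S (N : ℕ) (i : Fin N) : FreeGroup (Fin N) := FreeGroup.of i

/-- The braid relators on `N` generators `σ_1, …, σ_N`:
`σ_i σ_j σ_i⁻¹ σ_j⁻¹` for `i < j - 1` and `σ_i σ_{i+1} σ_i σ_{i+1}⁻¹ σ_i⁻¹ σ_{i+1}⁻¹`. -/
def braidRels (N : ℕ) : Set (FreeGroup (Fin N)) :=
  {w | (∃ i j : Fin N, (i : ℕ) + 1 < (j : ℕ) ∧
          w = S N i * S N j * (S N i)⁻¹ * (S N j)⁻¹)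
     ∨ (∃ i j : Fin N, (j : ℕ) = (i : ℕ) + 1 ∧
          w = S N i * S N j * S N i * (S N j)⁻¹ * (S N i)⁻¹ * (S N j)⁻¹)}

/-- `x` in the two-generator presentation. -/
def X : FreeGroup Bool := FreeGroup.of true

/-- `y` in the two-generator presentation. -/
def Y : FreeGroup Bool := FreeGroup.of false

/-- The two-generator relators of `B_n`:
`x y^k x y^{-k} x⁻¹ y^k x⁻¹ y^{-k}` for `2 ≤ k ≤ n-2`,
`x y x y⁻¹ x y x⁻¹ y⁻¹ x⁻¹ y x⁻¹ y⁻¹`, and `(xy)^{n-1} y^{-n}`. -/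
def xyBraidRels (n : ℕ) : Set (FreeGroup Bool) :=
  {w | (∃ k : ℕ, 2 ≤ k ∧ k ≤ n - 2 ∧
          w = X * Y ^ k * X * (Y ^ k)⁻¹ * X⁻¹ * Y ^ k * X⁻¹ * (Y ^ k)⁻¹)
     ∨ w = X * Y * X * Y⁻¹ * X * Y * X⁻¹ * Y⁻¹ * X⁻¹ * Y * X⁻¹ * Y⁻¹
     ∨ w = (X * Y) ^ (n - 1) * (Y ^ n)⁻¹}

namespace Stmt9

lemma rel_one {α : Type*} {rels : Set (FreeGroup α)} {r : FreeGroup α} (h : r ∈ rels) :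
    PresentedGroup.mk rels r = 1 :=
  (QuotientGroup.eq_one_iff r).mpr (Subgroup.subset_normalClosure h)

section Braid
variable {N : ℕ}

/-- `σ_{k+1}` (0-based `k`) in the braid presented group, extended by `1` for `k ≥ N`. -/
def u (N : ℕ) (k : ℕ) : PresentedGroup (braidRels N) :=
  if h : k < N then PresentedGroup.of ⟨k, h⟩ else 1

lemma u_coe (i : Fin N) : u N (i : ℕ) = PresentedGroup.of i := by
  simp [u, i.isLt]

lemma mk_S (i : Fin N) : PresentedGroup.mk (braidRels N) (S N i) = u N (i : ℕ) :=
  (u_coe i).symm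

lemma u_comm {a b : ℕ} (hab : a + 1 < b) : Commute (u N a) (u N b) := by
  by_cases hb : b < N
  · have ha : a < N := by omega
    have h1 : PresentedGroup.mk (braidRels N)
        (S N ⟨a, ha⟩ * S N ⟨b, hb⟩ * (S N ⟨a, ha⟩)⁻¹ * (S N ⟨b, hb⟩)⁻¹) = 1 :=
      rel_one (Or.inl ⟨⟨a, ha⟩, ⟨b, hb⟩, hab, rfl⟩)
    simp only [map_mul, map_inv, mk_S] at h1
    exact commutatorElement_eq_one_iff_commute.mp (by simpa [commutatorElement_def] using h1)
  · simp [u, hb, Commute.one_right]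

lemma u_braid {a : ℕ} (h : a + 1 < N) :
    u N a * u N (a + 1) * u N a = u N (a + 1) * u N a * u N (a + 1) := by
  have ha : a < N := by omega
  have h1 : PresentedGroup.mk (braidRels N)
      (S N ⟨a, ha⟩ * S N ⟨a+1, h⟩ * S N ⟨a, ha⟩ * (S N ⟨a+1, h⟩)⁻¹ * (S N ⟨a, ha⟩)⁻¹ *
        (S N ⟨a+1, h⟩)⁻¹) = 1 :=
    rel_one (Or.inr ⟨⟨a, ha⟩, ⟨a+1, h⟩, rfl, rfl⟩)
  simp only [map_mul, map_inv, mk_S] at h1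
  set p := u N a
  set q := u N (a + 1)
  have : p * q * p * (q * p * q)⁻¹ = 1 := by
    simpa [mul_assoc] using h1
  exact mul_inv_eq_one.mp this

/-- Partial product `σ_1 ⋯ σ_m`. -/
def P (N m : ℕ) : PresentedGroup (braidRels N) := ((List.range m).map (u N)).prod

lemma P_zero : P N 0 = 1 := by simp [P]

lemma P_succ (m : ℕ) : P N (m + 1) = P N m * u N m := by
  simp [P, List.range_succ]

/-- The element `δ = σ_1 σ_2 ⋯ σ_N`. -/
def Δ (N : ℕ) : PresentedGroup (braidRels N) := P N N

lemma delta_conj {i : ℕ} (h : i + 1 < N) : Δ N * u N i = u N (i + 1) * Δ N := by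
  have hsplit : List.range N = List.range' 0 i ++ i :: (i+1) :: List.range' (i+2) (N - i - 2) := by
    have h2 : N - i = (N - i - 2) + 1 + 1 := by omega
    have h3 := List.range'_append (s := 0) (m := i) (n := N - i) (step := 1)
    simp only [Nat.zero_add, Nat.one_mul] at h3
    rw [List.range_eq_range', ← show i + (N - i) = N by omega, ← h3, h2,
      List.range'_succ, List.range'_succ]
    norm_num
    omega
  set a := u N i with ha
  set b := u N (i + 1) with hb
  set A := ((List.range' 0 i).map (u N)).prod with hA
  set B := ((List.range' (i+2) (N - i - 2)).map (u N)).prod with hB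
  have hΔ : Δ N = A * (a * (b * B)) := by
    rw [Δ, P, hsplit]
    simp [mul_assoc]
    rfl
  have haB : Commute a B := by
    refine Commute.list_prod_right _ _ fun g hg => ?_
    obtain ⟨k, hk, rfl⟩ := List.mem_map.mp hg
    have := List.mem_range'_1.mp hk
    exact u_comm (by omega)
  have hbA : Commute b A := by
    refine Commute.list_prod_right _ _ fun g hg => ?_
    obtain ⟨k, hk, rfl⟩ := List.mem_map.mp hg
    have := List.mem_range'_1.mp hk
    exact (u_comm (show k + 1 < i + 1 by omega)).symm
  have hbr : a * b * a = b * a * b := u_braid h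
  rw [hΔ]
  rw [show A * (a * (b * B)) * a = A * (a * (b * (B * a))) by simp [mul_assoc]]
  rw [← haB.eq]
  rw [show A * (a * (b * (a * B))) = A * (a * b * a * B) by simp [mul_assoc]]
  rw [hbr]
  rw [show A * (b * a * b * B) = A * b * (a * (b * B)) by simp [mul_assoc]]
  rw [← hbA.eq, mul_assoc]

lemma delta_pow {i : ℕ} (h : i < N) : Δ N ^ i * u N 0 = u N i * Δ N ^ i := by
  induction i with
  | zero => simp
  | succ m ih =>
    have hm : m < N := by omega
    calc Δ N ^ (m+1) * u N 0 = Δ N * (Δ N ^ m * u N 0) := by rw [pow_succ', mul_assoc]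
      _ = Δ N * (u N m * Δ N ^ m) := by rw [ih hm]
      _ = (Δ N * u N m) * Δ N ^ m := by rw [mul_assoc]
      _ = (u N (m+1) * Δ N) * Δ N ^ m := by rw [delta_conj h]
      _ = u N (m+1) * Δ N ^ (m+1) := by rw [mul_assoc, ← pow_succ']

lemma u0_delta_pow {m : ℕ} (h : m ≤ N) : (u N 0 * Δ N) ^ m = P N m * Δ N ^ m := by
  induction m with
  | zero => simp [P_zero]
  | succ m ih =>
    have hm : m < N := by omega
    rw [pow_succ, ih (by omega), P_succ]
    calc P N m * Δ N ^ m * (u N 0 * Δ N) = P N m * (Δ N ^ m * u N 0) * Δ N := by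
          simp [mul_assoc]
      _ = P N m * (u N m * Δ N ^ m) * Δ N := by rw [delta_pow hm]
      _ = P N m * u N m * Δ N ^ (m + 1) := by rw [pow_succ]; simp [mul_assoc]

lemma u0_delta_pow_N : (u N 0 * Δ N) ^ N = Δ N ^ (N + 1) := by
  rw [u0_delta_pow le_rfl, pow_succ']
  rfl

end Braid

section XY
variable (n : ℕ)

def xx : PresentedGroup (xyBraidRels n) := PresentedGroup.of true
def yy : PresentedGroup (xyBraidRels n) := PresentedGroup.of false

lemma mk_X : PresentedGroup.mk (xyBraidRels n) X = xx n := rfl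
lemma mk_Y : PresentedGroup.mk (xyBraidRels n) Y = yy n := rfl

/-- `t k = y^k x y^{-k}`. -/
def t (k : ℕ) : PresentedGroup (xyBraidRels n) := yy n ^ k * xx n * (yy n ^ k)⁻¹

lemma t_zero : t n 0 = xx n := by simp [t]

lemma t_conj (a k : ℕ) : t n (a + k) = yy n ^ a * t n k * (yy n ^ a)⁻¹ := by
  simp [t, pow_add, mul_assoc]

variable {n}

lemma x_t_comm {k : ℕ} (h2 : 2 ≤ k) (hk : k ≤ n - 2) : Commute (xx n) (t n k) := by
  have h1 : PresentedGroup.mk (xyBraidRels n)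
      (X * Y ^ k * X * (Y ^ k)⁻¹ * X⁻¹ * Y ^ k * X⁻¹ * (Y ^ k)⁻¹) = 1 :=
    rel_one (Or.inl ⟨k, h2, hk, rfl⟩)
  simp only [map_mul, map_inv, map_pow, mk_X, mk_Y] at h1
  refine commutatorElement_eq_one_iff_commute.mp ?_
  rw [commutatorElement_def, ← h1, t]
  group

lemma xy_braid : xx n * t n 1 * xx n = t n 1 * xx n * t n 1 := by
  have h1 : PresentedGroup.mk (xyBraidRels n)
      (X * Y * X * Y⁻¹ * X * Y * X⁻¹ * Y⁻¹ * X⁻¹ * Y * X⁻¹ * Y⁻¹) = 1 :=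
    rel_one (Or.inr (Or.inl rfl))
  simp only [map_mul, map_inv, mk_X, mk_Y] at h1
  have h2 : xx n * t n 1 * xx n * (t n 1 * xx n * t n 1)⁻¹ = 1 := by
    rw [← h1, t]
    group
  exact mul_inv_eq_one.mp h2

lemma xy_pow : (xx n * yy n) ^ (n - 1) = yy n ^ n := by
  have h1 : PresentedGroup.mk (xyBraidRels n) ((X * Y) ^ (n - 1) * (Y ^ n)⁻¹) = 1 :=
    rel_one (Or.inr (Or.inr rfl))
  simp only [map_mul, map_inv, map_pow, mk_X, mk_Y] at h1
  exact mul_inv_eq_one.mp h1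

end XY

section Iso
variable {n : ℕ}

lemma hphi (hn : 3 ≤ n) : ∀ r ∈ braidRels (n - 1),
    FreeGroup.lift (fun i : Fin (n - 1) => t n (i : ℕ)) r = 1 := by
  rintro r (⟨i, j, hij, rfl⟩ | ⟨i, j, hij, rfl⟩)
  · simp only [map_mul, map_inv, S, FreeGroup.lift_apply_of]
    set c := MulAut.conj (yy n ^ (i : ℕ)) with hc
    have hk2 : 2 ≤ (j : ℕ) - (i : ℕ) := by omega
    have hkn : (j : ℕ) - (i : ℕ) ≤ n - 2 := by have := j.isLt; omega
    have hti : t n (i : ℕ) = c (t n 0) := by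
      rw [hc, MulAut.conj_apply, ← t_conj, Nat.add_zero]
    have htj : t n (j : ℕ) = c (t n ((j : ℕ) - (i : ℕ))) := by
      rw [hc, MulAut.conj_apply, ← t_conj]
      congr 1
      omega
    rw [hti, htj, ← map_inv, ← map_inv, ← map_mul, ← map_mul, ← map_mul]
    have hone : t n 0 * t n ((j : ℕ) - (i : ℕ)) * (t n 0)⁻¹ *
        (t n ((j : ℕ) - (i : ℕ)))⁻¹ = 1 := by
      rw [t_zero, ← commutatorElement_def]
      exact commutatorElement_eq_one_iff_commute.mpr (x_t_comm hk2 hkn)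
    rw [hone, map_one]
  · simp only [map_mul, map_inv, S, FreeGroup.lift_apply_of]
    set c := MulAut.conj (yy n ^ (i : ℕ)) with hc
    have hti : t n (i : ℕ) = c (t n 0) := by
      rw [hc, MulAut.conj_apply, ← t_conj, Nat.add_zero]
    have htj : t n (j : ℕ) = c (t n 1) := by
      rw [hij, hc, MulAut.conj_apply, ← t_conj]
    rw [hti, htj, ← map_inv, ← map_inv, ← map_mul, ← map_mul, ← map_mul, ← map_mul, ← map_mul]
    have hone : t n 0 * t n 1 * t n 0 * (t n 1)⁻¹ * (t n 0)⁻¹ * (t n 1)⁻¹ = 1 := by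
      rw [t_zero]
      rw [show xx n * t n 1 * xx n * (t n 1)⁻¹ * (xx n)⁻¹ * (t n 1)⁻¹
          = (xx n * t n 1 * xx n) * (t n 1 * xx n * t n 1)⁻¹ by group]
      rw [xy_braid]
      group
    rw [hone, map_one]

lemma hpsi (hn : 3 ≤ n) : ∀ r ∈ xyBraidRels n,
    FreeGroup.lift (fun b : Bool => if b then u (n - 1) 0 else Δ (n - 1)) r = 1 := by
  rintro r (⟨k, hk2, hkn, rfl⟩ | rfl | rfl) <;>
    simp only [map_mul, map_inv, map_pow, X, Y, FreeGroup.lift_apply_of, Bool.false_eq_true, if_true, if_false]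
  · set a := u (n - 1) 0 with ha
    set b := Δ (n - 1) with hb
    have hlt : k < n - 1 := by omega
    have hw : b ^ k * a * (b ^ k)⁻¹ = u (n - 1) k := by
      rw [hb, ha, delta_pow hlt]
      group
    rw [show a * b ^ k * a * (b ^ k)⁻¹ * a⁻¹ * b ^ k * a⁻¹ * (b ^ k)⁻¹
        = a * (b ^ k * a * (b ^ k)⁻¹) * a⁻¹ * (b ^ k * a * (b ^ k)⁻¹)⁻¹ by group]
    rw [hw, ← commutatorElement_def]
    exact commutatorElement_eq_one_iff_commute.mpr (u_comm (by omega))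
  · set a := u (n - 1) 0 with ha
    set b := Δ (n - 1) with hb
    have hw : b * a * b⁻¹ = u (n - 1) 1 := by
      have h1 := delta_pow (N := n - 1) (i := 1) (by omega)
      rw [pow_one] at h1
      rw [hb, ha, h1]
      group
    rw [show a * b * a * b⁻¹ * a * b * a⁻¹ * b⁻¹ * a⁻¹ * b * a⁻¹ * b⁻¹
        = a * (b * a * b⁻¹) * a * (b * a * b⁻¹)⁻¹ * a⁻¹ * (b * a * b⁻¹)⁻¹ by group]
    rw [hw]
    rw [show a * u (n-1) 1 * a * (u (n-1) 1)⁻¹ * a⁻¹ * (u (n-1) 1)⁻¹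
        = (a * u (n-1) 1 * a) * (u (n-1) 1 * a * u (n-1) 1)⁻¹ by group]
    rw [ha, u_braid (by omega)]
    group
  · rw [u0_delta_pow_N, show n - 1 + 1 = n by omega]
    group

/-- The forward homomorphism. -/
def Φ (hn : 3 ≤ n) : PresentedGroup (braidRels (n - 1)) →* PresentedGroup (xyBraidRels n) :=
  PresentedGroup.toGroup (hphi hn)

/-- The backward homomorphism. -/
def Ψ (hn : 3 ≤ n) : PresentedGroup (xyBraidRels n) →* PresentedGroup (braidRels (n - 1)) :=
  PresentedGroup.toGroup (hpsi hn)

lemma Φ_of (hn : 3 ≤ n) (i : Fin (n - 1)) : Φ hn (PresentedGroup.of i) = t n (i : ℕ) :=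
  PresentedGroup.toGroup.of _

lemma Ψ_x (hn : 3 ≤ n) : Ψ hn (xx n) = u (n - 1) 0 := PresentedGroup.toGroup.of _
lemma Ψ_y (hn : 3 ≤ n) : Ψ hn (yy n) = Δ (n - 1) := PresentedGroup.toGroup.of _

lemma psi_phi (hn : 3 ≤ n) : (Ψ hn).comp (Φ hn) = MonoidHom.id _ := by
  ext i
  simp only [MonoidHom.comp_apply, MonoidHom.id_apply, Φ_of, t, map_mul, map_inv, map_pow,
    Ψ_x hn, Ψ_y hn]
  rw [delta_pow i.isLt]
  rw [u_coe]
  group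

lemma phi_P (hn : 3 ≤ n) {m : ℕ} (hm : m ≤ n - 1) :
    Φ hn (P (n - 1) m) = (xx n * yy n) ^ m * (yy n ^ m)⁻¹ := by
  induction m with
  | zero => simp [P_zero]
  | succ m ih =>
    have hmlt : m < n - 1 := by omega
    have hum : u (n - 1) m = PresentedGroup.of (⟨m, hmlt⟩ : Fin (n - 1)) := u_coe (⟨m, hmlt⟩ : Fin (n - 1))
    rw [P_succ, map_mul, ih (by omega), hum, Φ_of hn ⟨m, hmlt⟩]
    show (xx n * yy n) ^ m * (yy n ^ m)⁻¹ * t n m = _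
    rw [t, pow_succ, pow_succ]
    group

lemma phi_psi (hn : 3 ≤ n) : (Φ hn).comp (Ψ hn) = MonoidHom.id _ := by
  ext b
  cases b
  · -- false : Φ (Δ) = y
    have h0 : (PresentedGroup.of false : PresentedGroup (xyBraidRels n)) = yy n := rfl
    simp only [MonoidHom.comp_apply, MonoidHom.id_apply, h0]
    rw [Ψ_y hn, show Δ (n - 1) = P (n - 1) (n - 1) from rfl, phi_P hn le_rfl, xy_pow]
    have hsucc : yy n ^ n = yy n ^ (n - 1) * yy n := by
      rw [← pow_succ]
      congr 1
      omega
    rw [hsucc]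
    group
  · -- true : Φ (u 0) = x
    have h0 : (PresentedGroup.of true : PresentedGroup (xyBraidRels n)) = xx n := rfl
    simp only [MonoidHom.comp_apply, MonoidHom.id_apply, h0, Ψ_x hn]
    have hlt : 0 < n - 1 := by omega
    have h1 : u (n - 1) 0 = PresentedGroup.of (⟨0, hlt⟩ : Fin (n - 1)) := u_coe (⟨0, hlt⟩ : Fin (n - 1))
    rw [h1, Φ_of hn ⟨0, hlt⟩]
    exact t_zero n

end Iso
end Stmt9


/-- for `n ≥ 3`, the braid group `B_n` on its Artin generators
`σ_1, …, σ_{n-1}` is isomorphic to the two-generator presented group, via an isomorphism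
sending `σ_i` to `y^{i-1} x y^{1-i}` for each `1 ≤ i ≤ n-1`. -/
theorem stmt9 (n : ℕ) (hn : 3 ≤ n) :
    ∃ e : PresentedGroup (braidRels (n - 1)) ≃* PresentedGroup (xyBraidRels n),
      ∀ i : Fin (n - 1),
        e (PresentedGroup.of i)
          = (PresentedGroup.of false : PresentedGroup (xyBraidRels n)) ^ (i : ℕ) *
              PresentedGroup.of true *
              ((PresentedGroup.of false : PresentedGroup (xyBraidRels n)) ^ (i : ℕ))⁻¹ := by
  refine ⟨MonoidHom.toMulEquiv (Stmt9.Φ hn) (Stmt9.Ψ hn) (Stmt9.psi_phi hn)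
    (Stmt9.phi_psi hn), fun i => ?_⟩
  exact Stmt9.Φ_of hn i
end

section
/- Let g ≥ 2. The presented group with generators σ_1, …, σ_{2g+1} and relators σ_i σ_j σ_i^{−1} σ_j^{−1} for 1 ≤ i < j − 1 ≤ 2g, σ_i σ_{i+1} σ_i σ_{i+1}^{−1} σ_i^{−1} σ_{i+1}^{−1} for 1 ≤ i ≤ 2g, (σ_1 ⋯ σ_{2g+1})^{2g+2}, ((σ_1 ⋯ σ_{2g+1})(σ_{2g+1} ⋯ σ_1))^2, and the commutator [(σ_1 ⋯ σ_{2g+1})(σ_{2g+1} ⋯ σ_1), σ_1] (the Birman–Hilden presentation of the genus-g hyperelliptic mapping class group) is isomorphic to the presented group with generators x, y and relators x y^k x y^{−k} x^{−1} y^k x^{−1} y^{−k} for 2 ≤ k ≤ 2g, x y x y^{−1} x y x^{−1} y^{−1} x^{−1} y x^{−1} y^{−1}, (xy)^{2g+1} y^{−2g−2}, y^{2g+2}, (y^{−1} x)^{4g+2}, and (y^{−1} x)^{2g+1} (y x^{−1})^{2g+1}, via an isomorphism sending σ_i to y^{i−1} x y^{1−i} for each 1 ≤ i ≤ 2g + 1.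 -/
/-- The word `σ_1 σ_2 ⋯ σ_N`. -/
def deltaWord (N : ℕ) : FreeGroup (Fin N) := ((List.finRange N).map (S N)).prod

/-- The word `σ_N ⋯ σ_2 σ_1`. -/
def deltaRevWord (N : ℕ) : FreeGroup (Fin N) :=
  ((List.finRange N).reverse.map (S N)).prod

/-- The Birman–Hilden relators of the genus-`g` hyperelliptic mapping class group, on the
generators `σ_1, …, σ_{2g+1}`. -/
def hypRels (g : ℕ) : Set (FreeGroup (Fin (2 * g + 1))) :=
  {w | (∃ i j : Fin (2 * g + 1), (i : ℕ) + 1 < (j : ℕ) ∧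
          w = S _ i * S _ j * (S _ i)⁻¹ * (S _ j)⁻¹)
     ∨ (∃ i j : Fin (2 * g + 1), (j : ℕ) = (i : ℕ) + 1 ∧
          w = S _ i * S _ j * S _ i * (S _ j)⁻¹ * (S _ i)⁻¹ * (S _ j)⁻¹)
     ∨ w = deltaWord (2 * g + 1) ^ (2 * g + 2)
     ∨ w = (deltaWord (2 * g + 1) * deltaRevWord (2 * g + 1)) ^ 2
     ∨ w = deltaWord (2 * g + 1) * deltaRevWord (2 * g + 1) * S _ ⟨0, by omega⟩ *
            (deltaWord (2 * g + 1) * deltaRevWord (2 * g + 1))⁻¹ * (S _ ⟨0, by omega⟩)⁻¹}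

/-- The two-generator relators of the genus-`g` hyperelliptic mapping class group. -/
def xyHypRels (g : ℕ) : Set (FreeGroup Bool) :=
  {w | (∃ k : ℕ, 2 ≤ k ∧ k ≤ 2 * g ∧
          w = X * Y ^ k * X * (Y ^ k)⁻¹ * X⁻¹ * Y ^ k * X⁻¹ * (Y ^ k)⁻¹)
     ∨ w = X * Y * X * Y⁻¹ * X * Y * X⁻¹ * Y⁻¹ * X⁻¹ * Y * X⁻¹ * Y⁻¹
     ∨ w = (X * Y) ^ (2 * g + 1) * (Y ^ (2 * g + 2))⁻¹
     ∨ w = Y ^ (2 * g + 2)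
     ∨ w = (Y⁻¹ * X) ^ (4 * g + 2)
     ∨ w = (Y⁻¹ * X) ^ (2 * g + 1) * (Y * X⁻¹) ^ (2 * g + 1)}

namespace Stmt10Aux

lemma mk_rel_eq_one {α : Type*} (rels : Set (FreeGroup α)) {r : FreeGroup α} (hr : r ∈ rels) :
    PresentedGroup.mk rels r = 1 :=
  (QuotientGroup.eq_one_iff r).2 (Subgroup.subset_normalClosure hr)

lemma prod_comm_of_forall {G : Type*} [Group G] (l : List G) (a : G)
    (h : ∀ b ∈ l, b * a = a * b) : l.prod * a = a * l.prod := by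
  induction l with
  | nil => simp
  | cons b l ih =>
      simp only [List.prod_cons, mul_assoc, ih fun c hc => h c (List.mem_cons_of_mem _ hc)]
      rw [← mul_assoc, h b List.mem_cons_self, mul_assoc]

variable (g : ℕ)

abbrev Gq := PresentedGroup (hypRels g)

/-- ℕ-indexed generators, `1` out of range. -/
def t (i : ℕ) : Gq g := if h : i < 2 * g + 1 then PresentedGroup.of ⟨i, h⟩ else 1

lemma t_of (i : Fin (2 * g + 1)) : PresentedGroup.of (rels := hypRels g) i = t g i := by
  simp [t, i.isLt]

lemma mk_S (i : Fin (2 * g + 1)) :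
    PresentedGroup.mk (hypRels g) (S _ i) = t g i := t_of g i

def P (m : ℕ) : Gq g := ((List.range m).map (t g)).prod

def dG : Gq g := P g (2 * g + 1)

def dR : Gq g := (((List.range (2 * g + 1)).reverse).map (t g)).prod

lemma mk_deltaWord : PresentedGroup.mk (hypRels g) (deltaWord (2 * g + 1)) = dG g := by
  unfold deltaWord dG P
  rw [map_list_prod, List.map_map, ← (show (List.finRange (2 * g + 1)).map Fin.val = List.range (2 * g + 1) from List.ext_getElem (by simp) (by simp)), List.map_map]
  congr 1
  apply List.map_congr_left
  intro i _
  exact t_of g i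

lemma mk_deltaRevWord : PresentedGroup.mk (hypRels g) (deltaRevWord (2 * g + 1)) = dR g := by
  unfold deltaRevWord dR
  rw [map_list_prod, List.map_map, ← (show (List.finRange (2 * g + 1)).map Fin.val = List.range (2 * g + 1) from List.ext_getElem (by simp) (by simp)), ← List.map_reverse, List.map_map]
  congr 1
  apply List.map_congr_left
  intro i _
  exact t_of g i

end Stmt10Aux

namespace Stmt10Aux

lemma comm_of_commutator {G : Type*} [Group G] {a b : G} (h : a * b * a⁻¹ * b⁻¹ = 1) :
    a * b = b * a := by
  have h2 : a * b * a⁻¹ = b := by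
    have := congrArg (· * b) h
    simpa [mul_assoc] using this
  calc a * b = a * b * a⁻¹ * a := by group
    _ = b * a := by rw [h2]

lemma braid_of_rel {G : Type*} [Group G] {a b : G}
    (h : a * b * a * b⁻¹ * a⁻¹ * b⁻¹ = 1) : a * b * a = b * a * b := by
  have h2 : a * b * a * b⁻¹ * a⁻¹ = b := by
    have := congrArg (· * b) h
    simpa [mul_assoc] using this
  calc a * b * a = (a * b * a * b⁻¹ * a⁻¹) * (a * b) := by group
    _ = b * (a * b) := by rw [h2]
    _ = b * a * b := by group

variable (g : ℕ)

lemma gcomm {i j : ℕ} (hij : i + 1 < j) : t g i * t g j = t g j * t g i := by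
  by_cases hj : j < 2 * g + 1
  · have hi : i < 2 * g + 1 := by omega
    have h1 : PresentedGroup.mk (hypRels g)
        (S _ ⟨i, hi⟩ * S _ ⟨j, hj⟩ * (S _ ⟨i, hi⟩)⁻¹ * (S _ ⟨j, hj⟩)⁻¹) = 1 :=
      mk_rel_eq_one _ (Or.inl ⟨⟨i, hi⟩, ⟨j, hj⟩, hij, rfl⟩)
    simp only [map_mul, map_inv, mk_S] at h1
    simp only [t, dif_pos hi, dif_pos hj] at h1 ⊢
    exact comm_of_commutator h1
  · simp only [t, dif_neg hj, mul_one, one_mul]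

lemma gbraid {i : ℕ} (hi : i + 1 < 2 * g + 1) :
    t g i * t g (i + 1) * t g i = t g (i + 1) * t g i * t g (i + 1) := by
  have hi0 : i < 2 * g + 1 := by omega
  have h1 : PresentedGroup.mk (hypRels g)
      (S _ ⟨i, hi0⟩ * S _ ⟨i+1, hi⟩ * S _ ⟨i, hi0⟩ * (S _ ⟨i+1, hi⟩)⁻¹ * (S _ ⟨i, hi0⟩)⁻¹ *
        (S _ ⟨i+1, hi⟩)⁻¹) = 1 :=
    mk_rel_eq_one _ (Or.inr (Or.inl ⟨⟨i, hi0⟩, ⟨i+1, hi⟩, rfl, rfl⟩))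
  simp only [map_mul, map_inv, mk_S] at h1
  simp only [t, dif_pos hi0, dif_pos hi] at h1 ⊢
  exact braid_of_rel h1

lemma g3 : dG g ^ (2 * g + 2) = 1 := by
  have h1 : PresentedGroup.mk (hypRels g) (deltaWord (2 * g + 1) ^ (2 * g + 2)) = 1 :=
    mk_rel_eq_one _ (Or.inr (Or.inr (Or.inl rfl)))
  simpa only [map_pow, mk_deltaWord] using h1

lemma g4 : (dG g * dR g) ^ 2 = 1 := by
  have h1 : PresentedGroup.mk (hypRels g)
      ((deltaWord (2 * g + 1) * deltaRevWord (2 * g + 1)) ^ 2) = 1 :=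
    mk_rel_eq_one _ (Or.inr (Or.inr (Or.inr (Or.inl rfl))))
  simpa only [map_pow, map_mul, mk_deltaWord, mk_deltaRevWord] using h1

lemma g5 : (dG g * dR g) * t g 0 = t g 0 * (dG g * dR g) := by
  have h1 : PresentedGroup.mk (hypRels g)
      (deltaWord (2 * g + 1) * deltaRevWord (2 * g + 1) * S _ ⟨0, by omega⟩ *
        (deltaWord (2 * g + 1) * deltaRevWord (2 * g + 1))⁻¹ * (S _ ⟨0, by omega⟩)⁻¹) = 1 :=
    mk_rel_eq_one _ (Or.inr (Or.inr (Or.inr (Or.inr rfl))))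
  simp only [map_mul, map_inv, mk_deltaWord, mk_deltaRevWord, mk_S] at h1
  exact comm_of_commutator h1

end Stmt10Aux

namespace Stmt10Aux
variable (g : ℕ)

lemma P_succ (m : ℕ) : P g (m + 1) = P g m * t g m := by
  unfold P
  rw [List.range_succ, List.map_append, List.prod_append]
  simp

lemma key {i : ℕ} (hi : i + 1 < 2 * g + 1) : dG g * t g i = t g (i + 1) * dG g := by
  obtain ⟨m, hnm⟩ : ∃ m, 2 * g + 1 = (i + 2) + m := ⟨2 * g + 1 - (i + 2), by omega⟩
  set L : List (Gq g) := ((List.range m).map (fun j => i + 2 + j)).map (t g) with hL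
  have hr : List.range (2 * g + 1) = List.range (i + 2) ++ (List.range m).map (i + 2 + ·) := by
    rw [hnm]; exact List.range_add
  have hsplit : dG g = P g (i + 2) * L.prod := by
    unfold dG P
    rw [hr, List.map_append, List.prod_append]
  have hLcomm : L.prod * t g i = t g i * L.prod := by
    apply prod_comm_of_forall
    intro b hb
    rw [hL, List.mem_map] at hb
    obtain ⟨c, hc, rfl⟩ := hb
    rw [List.mem_map] at hc
    obtain ⟨j, _, rfl⟩ := hc
    exact (gcomm g (by omega)).symm
  have hPi : P g i * t g (i + 1) = t g (i + 1) * P g i := by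
    apply prod_comm_of_forall
    intro b hb
    rw [List.mem_map] at hb
    obtain ⟨m, hm, rfl⟩ := hb
    rw [List.mem_range] at hm
    exact gcomm g (by omega)
  have hP2 : P g (i + 2) * t g i = t g (i + 1) * P g (i + 2) := by
    rw [show i + 2 = (i + 1) + 1 from rfl, P_succ, P_succ]
    calc P g i * t g i * t g (i + 1) * t g i
        = P g i * (t g i * t g (i + 1) * t g i) := by simp [mul_assoc]
      _ = P g i * (t g (i + 1) * t g i * t g (i + 1)) := by rw [gbraid g hi]
      _ = (P g i * t g (i + 1)) * (t g i * t g (i + 1)) := by simp [mul_assoc]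
      _ = t g (i + 1) * (P g i * t g i * t g (i + 1)) := by rw [hPi]; simp [mul_assoc]
  calc dG g * t g i = P g (i + 2) * (L.prod * t g i) := by rw [hsplit]; simp [mul_assoc]
    _ = (P g (i + 2) * t g i) * L.prod := by rw [hLcomm]; simp [mul_assoc]
    _ = t g (i + 1) * (P g (i + 2) * L.prod) := by rw [hP2]; simp [mul_assoc]
    _ = t g (i + 1) * dG g := by rw [← hsplit]

lemma conjGen (k : ℕ) : ∀ i : ℕ, k + i ≤ 2 * g → dG g ^ k * t g i = t g (k + i) * dG g ^ k := by
  induction k with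
  | zero => intro i _; simp
  | succ m ih =>
      intro i hki
      calc dG g ^ (m + 1) * t g i = dG g ^ m * (dG g * t g i) := by
            rw [pow_succ, mul_assoc]
        _ = dG g ^ m * (t g (i + 1) * dG g) := by rw [key g (by omega)]
        _ = (dG g ^ m * t g (i + 1)) * dG g := by rw [mul_assoc]
        _ = t g (m + 1 + i) * dG g ^ (m + 1) := by
            rw [ih (i + 1) (by omega), pow_succ, show m + (i + 1) = m + 1 + i by omega,
              mul_assoc]

lemma conj {k : ℕ} (hk : k ≤ 2 * g) : dG g ^ k * t g 0 = t g k * dG g ^ k := by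
  simpa using conjGen g k 0 (by omega)

end Stmt10Aux

namespace Stmt10Aux
variable (g : ℕ)

def Rr (m : ℕ) : Gq g := ((List.range m).reverse.map (t g)).prod

lemma Rr_succ (m : ℕ) : Rr g (m + 1) = t g m * Rr g m := by
  unfold Rr
  rw [List.range_succ, List.reverse_append]
  simp

lemma dR_eq : dR g = Rr g (2 * g + 1) := rfl

lemma prodForm : ∀ m, m ≤ 2 * g + 1 → (t g 0 * dG g) ^ m = P g m * dG g ^ m := by
  intro m
  induction m with
  | zero => intro _; simp [P]
  | succ m ih =>
      intro hm
      calc (t g 0 * dG g) ^ (m + 1) = (P g m * dG g ^ m) * (t g 0 * dG g) := by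
            rw [pow_succ, ih (by omega)]
        _ = P g m * (dG g ^ m * t g 0) * dG g := by simp [mul_assoc]
        _ = P g m * (t g m * dG g ^ m) * dG g := by rw [conj g (by omega)]
        _ = P g (m + 1) * dG g ^ (m + 1) := by rw [P_succ, pow_succ]; simp [mul_assoc]

lemma revForm : ∀ m, m ≤ 2 * g + 1 → ((dG g)⁻¹ * t g 0) ^ m = (dG g ^ m)⁻¹ * Rr g m := by
  intro m
  induction m with
  | zero => intro _; simp [Rr]
  | succ m ih =>
      intro hm
      have hc : t g 0 * (dG g ^ m)⁻¹ = (dG g ^ m)⁻¹ * t g m := by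
        have := conj g (k := m) (by omega)
        calc t g 0 * (dG g ^ m)⁻¹
            = (dG g ^ m)⁻¹ * (dG g ^ m * t g 0) * (dG g ^ m)⁻¹ := by group
          _ = (dG g ^ m)⁻¹ * (t g m * dG g ^ m) * (dG g ^ m)⁻¹ := by rw [this]
          _ = (dG g ^ m)⁻¹ * t g m := by group
      calc ((dG g)⁻¹ * t g 0) ^ (m + 1)
          = (dG g)⁻¹ * (t g 0 * ((dG g ^ m)⁻¹ * Rr g m)) := by
            rw [pow_succ', mul_assoc, ih (by omega)]
        _ = (dG g)⁻¹ * ((dG g ^ m)⁻¹ * t g m * Rr g m) := by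
            rw [← mul_assoc (t g 0), hc]
        _ = (dG g ^ (m + 1))⁻¹ * Rr g (m + 1) := by
            rw [Rr_succ, pow_succ]
            group

lemma gkey1 : (t g 0 * dG g) ^ (2 * g + 1) = dG g ^ (2 * g + 2) := by
  rw [prodForm g _ le_rfl]
  show dG g * dG g ^ (2 * g + 1) = _
  rw [← pow_succ']

lemma dG_pow_inv : (dG g ^ (2 * g + 1))⁻¹ = dG g := by
  have h : dG g ^ (2 * g + 1) * dG g = 1 := by
    rw [← pow_succ]
    exact g3 g
  exact inv_eq_of_mul_eq_one_right h

lemma gdd : ((dG g)⁻¹ * t g 0) ^ (2 * g + 1) = dG g * dR g := by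
  rw [revForm g _ le_rfl, dG_pow_inv, dR_eq]

lemma grev2 : (dG g * (t g 0)⁻¹) ^ (2 * g + 1) = (dG g * dR g)⁻¹ := by
  have h1 : dG g * (t g 0)⁻¹ = (t g 0 * (dG g)⁻¹)⁻¹ := by group
  have h2 : t g 0 * (dG g)⁻¹ = t g 0 * ((dG g)⁻¹ * t g 0) * (t g 0)⁻¹ := by group
  rw [h1, inv_pow, h2, conj_pow, gdd]
  have h5 := g5 g
  have : t g 0 * (dG g * dR g) * (t g 0)⁻¹ = dG g * dR g := by
    rw [← h5]; group
  rw [this]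

end Stmt10Aux

namespace Stmt10Aux

variable (g : ℕ)

abbrev Hq := PresentedGroup (xyHypRels g)

def xh : Hq g := PresentedGroup.of true
def yh : Hq g := PresentedGroup.of false

lemma mk_X : PresentedGroup.mk (xyHypRels g) X = xh g := rfl
lemma mk_Y : PresentedGroup.mk (xyHypRels g) Y = yh g := rfl

lemma h4 : yh g ^ (2 * g + 2) = 1 := by
  have h1 := mk_rel_eq_one (xyHypRels g) (Or.inr (Or.inr (Or.inr (Or.inl rfl))))
  simpa only [map_pow, mk_Y] using h1

lemma hxy : (xh g * yh g) ^ (2 * g + 1) = 1 := by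
  have h1 := mk_rel_eq_one (xyHypRels g) (Or.inr (Or.inr (Or.inl rfl)))
  simp only [map_mul, map_pow, map_inv, mk_X, mk_Y] at h1
  have h2 := h4 g
  calc (xh g * yh g) ^ (2 * g + 1)
      = (xh g * yh g) ^ (2 * g + 1) * (yh g ^ (2 * g + 2))⁻¹ * yh g ^ (2 * g + 2) := by group
    _ = 1 := by rw [h1, h2]; group

lemma h5 : ((yh g)⁻¹ * xh g) ^ (4 * g + 2) = 1 := by
  have h1 := mk_rel_eq_one (xyHypRels g) (Or.inr (Or.inr (Or.inr (Or.inr (Or.inl rfl)))))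
  simpa only [map_mul, map_pow, map_inv, mk_X, mk_Y] using h1

lemma h6 : ((yh g)⁻¹ * xh g) ^ (2 * g + 1) * (yh g * (xh g)⁻¹) ^ (2 * g + 1) = 1 := by
  have h1 := mk_rel_eq_one (xyHypRels g)
    (Or.inr (Or.inr (Or.inr (Or.inr (Or.inr rfl)))))
  simpa only [map_mul, map_pow, map_inv, mk_X, mk_Y] using h1

lemma h1k {k : ℕ} (hk2 : 2 ≤ k) (hk : k ≤ 2 * g) :
    xh g * (yh g ^ k * xh g * (yh g ^ k)⁻¹) = (yh g ^ k * xh g * (yh g ^ k)⁻¹) * xh g := by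
  have h1 := mk_rel_eq_one (xyHypRels g) (Or.inl ⟨k, hk2, hk, rfl⟩)
  simp only [map_mul, map_pow, map_inv, mk_X, mk_Y] at h1
  apply comm_of_commutator
  calc xh g * (yh g ^ k * xh g * (yh g ^ k)⁻¹) * (xh g)⁻¹ * (yh g ^ k * xh g * (yh g ^ k)⁻¹)⁻¹
      = xh g * yh g ^ k * xh g * (yh g ^ k)⁻¹ * (xh g)⁻¹ * yh g ^ k * (xh g)⁻¹ *
        (yh g ^ k)⁻¹ := by group
    _ = 1 := h1

lemma h2b : xh g * (yh g * xh g * (yh g)⁻¹) * xh g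
    = (yh g * xh g * (yh g)⁻¹) * xh g * (yh g * xh g * (yh g)⁻¹) := by
  have h1 := mk_rel_eq_one (xyHypRels g) (Or.inr (Or.inl rfl))
  simp only [map_mul, map_inv, mk_X, mk_Y] at h1
  set a := yh g * xh g * (yh g)⁻¹ with ha
  have h2 : xh g * a * xh g * a⁻¹ * (xh g)⁻¹ * a⁻¹ = 1 := by
    calc xh g * a * xh g * a⁻¹ * (xh g)⁻¹ * a⁻¹
        = xh g * yh g * xh g * (yh g)⁻¹ * xh g * yh g * (xh g)⁻¹ * (yh g)⁻¹ * (xh g)⁻¹ *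
          yh g * (xh g)⁻¹ * (yh g)⁻¹ := by rw [ha]; group
      _ = 1 := h1
  have h3 : xh g * a * xh g * a⁻¹ * (xh g)⁻¹ = a := by
    have := congrArg (· * a) h2
    simpa [mul_assoc] using this
  calc xh g * a * xh g = (xh g * a * xh g * a⁻¹ * (xh g)⁻¹) * (xh g * a) := by group
    _ = a * (xh g * a) := by rw [h3]
    _ = a * xh g * a := by group

/-- conjugated generators -/
def u (i : ℕ) : Hq g := yh g ^ i * xh g * (yh g ^ i)⁻¹

lemma Qform : ∀ m : ℕ, ((List.range m).map (u g)).prod = (xh g * yh g) ^ m * (yh g ^ m)⁻¹ := by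
  intro m
  induction m with
  | zero => simp
  | succ m ih =>
      rw [List.range_succ, List.map_append, List.prod_append]
      simp only [List.map_cons, List.map_nil, List.prod_cons, List.prod_nil, ih]
      rw [u, pow_succ, pow_succ]
      group

lemma Rhform : ∀ m : ℕ,
    ((List.range m).reverse.map (u g)).prod = yh g ^ m * ((yh g)⁻¹ * xh g) ^ m := by
  intro m
  induction m with
  | zero => simp
  | succ m ih =>
      rw [List.range_succ, List.reverse_append]
      simp only [List.reverse_cons, List.reverse_nil, List.nil_append, List.singleton_append,
        List.map_cons, List.prod_cons, ih]
      rw [u, pow_succ (yh g) m, pow_succ' ((yh g)⁻¹ * xh g) m]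
      simp [mul_assoc]

lemma yh_pow_inv : (yh g ^ (2 * g + 1))⁻¹ = yh g := by
  have h : yh g ^ (2 * g + 1) * yh g = 1 := by
    rw [← pow_succ]
    exact h4 g
  exact inv_eq_of_mul_eq_one_right h

end Stmt10Aux

namespace Stmt10Aux

lemma conj_comm_aux {G : Type*} [Group G] (x y : G) (i k : ℕ)
    (h : x * (y ^ k * x * (y ^ k)⁻¹) = (y ^ k * x * (y ^ k)⁻¹) * x) :
    (y ^ i * x * (y ^ i)⁻¹) * (y ^ (i + k) * x * (y ^ (i + k))⁻¹) *
      (y ^ i * x * (y ^ i)⁻¹)⁻¹ * (y ^ (i + k) * x * (y ^ (i + k))⁻¹)⁻¹ = 1 := by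
  set c := y ^ k * x * (y ^ k)⁻¹ with hc
  have e : y ^ (i + k) * x * (y ^ (i + k))⁻¹ = y ^ i * c * (y ^ i)⁻¹ := by
    rw [hc, pow_add]; group
  have hc1 : x * c * x⁻¹ * c⁻¹ = 1 := by rw [h]; group
  rw [e]
  calc (y ^ i * x * (y ^ i)⁻¹) * (y ^ i * c * (y ^ i)⁻¹) *
      (y ^ i * x * (y ^ i)⁻¹)⁻¹ * (y ^ i * c * (y ^ i)⁻¹)⁻¹
      = y ^ i * (x * c * x⁻¹ * c⁻¹) * (y ^ i)⁻¹ := by group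
    _ = 1 := by rw [hc1]; group

lemma conj_braid_aux {G : Type*} [Group G] (x y : G) (i : ℕ)
    (h : x * (y * x * y⁻¹) * x = (y * x * y⁻¹) * x * (y * x * y⁻¹)) :
    (y ^ i * x * (y ^ i)⁻¹) * (y ^ (i + 1) * x * (y ^ (i + 1))⁻¹) * (y ^ i * x * (y ^ i)⁻¹) *
      (y ^ (i + 1) * x * (y ^ (i + 1))⁻¹)⁻¹ * (y ^ i * x * (y ^ i)⁻¹)⁻¹ *
      (y ^ (i + 1) * x * (y ^ (i + 1))⁻¹)⁻¹ = 1 := by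
  set a := y * x * y⁻¹ with ha
  have e : y ^ (i + 1) * x * (y ^ (i + 1))⁻¹ = y ^ i * a * (y ^ i)⁻¹ := by
    rw [ha, pow_succ]; group
  have hb : x * a * x * a⁻¹ * x⁻¹ * a⁻¹ = 1 := by rw [h]; group
  rw [e]
  calc (y ^ i * x * (y ^ i)⁻¹) * (y ^ i * a * (y ^ i)⁻¹) * (y ^ i * x * (y ^ i)⁻¹) *
      (y ^ i * a * (y ^ i)⁻¹)⁻¹ * (y ^ i * x * (y ^ i)⁻¹)⁻¹ * (y ^ i * a * (y ^ i)⁻¹)⁻¹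
      = y ^ i * (x * a * x * a⁻¹ * x⁻¹ * a⁻¹) * (y ^ i)⁻¹ := by group
    _ = 1 := by rw [hb]; group

variable (g : ℕ)

/-- the generator images for the forward map -/
def fmap : Fin (2 * g + 1) → Hq g := fun i => u g i

lemma lift_fmap_S (i : Fin (2 * g + 1)) :
    FreeGroup.lift (fmap g) (S _ i) = u g i := FreeGroup.lift_apply_of

lemma lift_fmap_range :
    FreeGroup.lift (fmap g) (deltaWord (2 * g + 1)) = ((List.range (2 * g + 1)).map (u g)).prod
      ∧ FreeGroup.lift (fmap g) (deltaRevWord (2 * g + 1)) =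
        ((List.range (2 * g + 1)).reverse.map (u g)).prod := by
  constructor
  · unfold deltaWord
    rw [map_list_prod, List.map_map, ← (show (List.finRange (2 * g + 1)).map Fin.val = List.range (2 * g + 1) from List.ext_getElem (by simp) (by simp)), List.map_map]
    congr 1
    exact List.map_congr_left fun i _ => lift_fmap_S g i
  · unfold deltaRevWord
    rw [map_list_prod, List.map_map, ← (show (List.finRange (2 * g + 1)).map Fin.val = List.range (2 * g + 1) from List.ext_getElem (by simp) (by simp)), ← List.map_reverse, List.map_map]
    congr 1
    exact List.map_congr_left fun i _ => lift_fmap_S g i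

lemma lift_fmap_deltaWord :
    FreeGroup.lift (fmap g) (deltaWord (2 * g + 1)) = yh g := by
  rw [(lift_fmap_range g).1, Qform, hxy, yh_pow_inv, one_mul]

lemma lift_fmap_deltaRevWord :
    FreeGroup.lift (fmap g) (deltaRevWord (2 * g + 1)) =
      (yh g)⁻¹ * ((yh g)⁻¹ * xh g) ^ (2 * g + 1) := by
  have hyp : yh g ^ (2 * g + 1) = (yh g)⁻¹ := by
    apply inv_injective
    rw [inv_inv]
    exact yh_pow_inv g
  rw [(lift_fmap_range g).2, Rhform, hyp]

lemma Th_eq : ((yh g)⁻¹ * xh g) ^ (2 * g + 1) = (xh g * (yh g)⁻¹) ^ (2 * g + 1) := by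
  have h := h6 g
  have h2 : ((yh g)⁻¹ * xh g) ^ (2 * g + 1) = ((yh g * (xh g)⁻¹) ^ (2 * g + 1))⁻¹ := by
    have := congrArg (· * ((yh g * (xh g)⁻¹) ^ (2 * g + 1))⁻¹) h
    simpa [mul_assoc] using this
  rw [h2, ← inv_pow, mul_inv_rev, inv_inv]

lemma hphi : ∀ r ∈ hypRels g, FreeGroup.lift (fmap g) r = 1 := by
  intro r hr
  rcases hr with ⟨i, j, hij, rfl⟩ | ⟨i, j, hij, rfl⟩ | rfl | rfl | rfl
  · obtain ⟨k, hk2, hjk⟩ : ∃ k, 2 ≤ k ∧ (j : ℕ) = (i : ℕ) + k :=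
      ⟨(j : ℕ) - (i : ℕ), by omega, by omega⟩
    have hk : k ≤ 2 * g := by have := j.isLt; omega
    simp only [map_mul, map_inv, lift_fmap_S]
    unfold u
    rw [hjk]
    exact conj_comm_aux _ _ _ _ (h1k g hk2 hk)
  · simp only [map_mul, map_inv, lift_fmap_S]
    unfold u
    rw [hij]
    have hb := h2b g
    have hb' : xh g * (yh g ^ 1 * xh g * (yh g ^ 1)⁻¹) * xh g
        = (yh g ^ 1 * xh g * (yh g ^ 1)⁻¹) * xh g * (yh g ^ 1 * xh g * (yh g ^ 1)⁻¹) := by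
      simpa using hb
    exact conj_braid_aux _ _ _ (by simpa using hb)
  · rw [map_pow, lift_fmap_deltaWord]
    exact h4 g
  · rw [map_pow, map_mul, lift_fmap_deltaWord, lift_fmap_deltaRevWord]
    have e1 : yh g * ((yh g)⁻¹ * ((yh g)⁻¹ * xh g) ^ (2 * g + 1)) =
        ((yh g)⁻¹ * xh g) ^ (2 * g + 1) := by group
    rw [e1, ← pow_mul]
    have e2 : (2 * g + 1) * 2 = 4 * g + 2 := by omega
    rw [e2]
    exact h5 g
  · simp only [map_mul, map_inv, lift_fmap_S, lift_fmap_deltaWord, lift_fmap_deltaRevWord]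
    have hu0 : u g (⟨0, by omega⟩ : Fin (2 * g + 1)) = xh g := by simp [u]
    rw [hu0]
    set T := ((yh g)⁻¹ * xh g) ^ (2 * g + 1) with hT
    have e1 : yh g * ((yh g)⁻¹ * T) = T := by group
    rw [e1]
    have hcomm : T * xh g = xh g * T := by
      have e2 : xh g * T * (xh g)⁻¹ = T := by
        rw [hT]
        have e3 : xh g * ((yh g)⁻¹ * xh g) ^ (2 * g + 1) * (xh g)⁻¹
            = (xh g * ((yh g)⁻¹ * xh g) * (xh g)⁻¹) ^ (2 * g + 1) := by
          rw [conj_pow]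
        rw [e3, show xh g * ((yh g)⁻¹ * xh g) * (xh g)⁻¹ = xh g * (yh g)⁻¹ by group,
          ← Th_eq]
      calc T * xh g = (xh g * T * (xh g)⁻¹) * xh g := by rw [e2]
        _ = xh g * T := by group
    rw [hcomm]
    group

end Stmt10Aux

namespace Stmt10Aux
variable (g : ℕ)

lemma uprod_eq : ((List.range (2 * g + 1)).map (u g)).prod = yh g := by
  rw [Qform, hxy, yh_pow_inv, one_mul]

def bmap : Bool → Gq g := fun c => if c then t g 0 else dG g

lemma hpsi (hg : 1 ≤ g) : ∀ r ∈ xyHypRels g, FreeGroup.lift (bmap g) r = 1 := by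
  intro r hr
  have hX : FreeGroup.lift (bmap g) X = t g 0 := FreeGroup.lift_apply_of
  have hY : FreeGroup.lift (bmap g) Y = dG g := FreeGroup.lift_apply_of
  rcases hr with ⟨k, hk2, hk, rfl⟩ | rfl | rfl | rfl | rfl | rfl
  · simp only [map_mul, map_inv, map_pow, hX, hY]
    have hc : dG g ^ k * t g 0 * (dG g ^ k)⁻¹ = t g k := by
      rw [conj g hk]; group
    have hcomm : t g 0 * t g k = t g k * t g 0 := gcomm g (by omega)
    calc t g 0 * dG g ^ k * t g 0 * (dG g ^ k)⁻¹ * (t g 0)⁻¹ * dG g ^ k * (t g 0)⁻¹ *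
        (dG g ^ k)⁻¹
        = t g 0 * (dG g ^ k * t g 0 * (dG g ^ k)⁻¹) * (t g 0)⁻¹ *
          (dG g ^ k * t g 0 * (dG g ^ k)⁻¹)⁻¹ := by group
      _ = t g 0 * t g k * (t g 0)⁻¹ * (t g k)⁻¹ := by rw [hc]
      _ = t g k * t g 0 * (t g 0)⁻¹ * (t g k)⁻¹ := by rw [hcomm]
      _ = 1 := by group
  · simp only [map_mul, map_inv, hX, hY]
    have hc : dG g * t g 0 * (dG g)⁻¹ = t g 1 := by
      rw [key g (i := 0) (by omega)]; group
    have hb : t g 0 * t g 1 * t g 0 = t g 1 * t g 0 * t g 1 := gbraid g (i := 0) (by omega)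
    calc t g 0 * dG g * t g 0 * (dG g)⁻¹ * t g 0 * dG g * (t g 0)⁻¹ * (dG g)⁻¹ * (t g 0)⁻¹ *
        dG g * (t g 0)⁻¹ * (dG g)⁻¹
        = t g 0 * (dG g * t g 0 * (dG g)⁻¹) * t g 0 * (dG g * t g 0 * (dG g)⁻¹)⁻¹ *
          (t g 0)⁻¹ * (dG g * t g 0 * (dG g)⁻¹)⁻¹ := by group
      _ = t g 0 * t g 1 * t g 0 * (t g 1)⁻¹ * (t g 0)⁻¹ * (t g 1)⁻¹ := by rw [hc]
      _ = (t g 0 * t g 1 * t g 0) * (t g 1 * t g 0 * t g 1)⁻¹ := by group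
      _ = 1 := by rw [hb]; group
  · simp only [map_mul, map_inv, map_pow, hX, hY]
    rw [gkey1]
    group
  · simp only [map_pow, hY]
    exact g3 g
  · simp only [map_mul, map_inv, map_pow, hX, hY]
    have e2 : (4:ℕ) * g + 2 = (2 * g + 1) * 2 := by omega
    rw [e2, pow_mul, gdd]
    exact g4 g
  · simp only [map_mul, map_inv, map_pow, hX, hY]
    rw [gdd, grev2]
    group

def phi : Gq g →* Hq g := PresentedGroup.toGroup (hphi g)

def psi (hg : 1 ≤ g) : Hq g →* Gq g := PresentedGroup.toGroup (hpsi g hg)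

lemma psi_xh (hg : 1 ≤ g) : psi g hg (xh g) = t g 0 := PresentedGroup.toGroup.of _
lemma psi_yh (hg : 1 ≤ g) : psi g hg (yh g) = dG g := PresentedGroup.toGroup.of _

lemma comp_psi_phi (hg : 1 ≤ g) : (psi g hg).comp (phi g) = MonoidHom.id (Gq g) := by
  apply PresentedGroup.ext
  intro i
  simp only [MonoidHom.comp_apply, MonoidHom.id_apply]
  rw [show phi g (PresentedGroup.of i) = u g i from PresentedGroup.toGroup.of _]
  rw [u]
  simp only [map_mul, map_pow, map_inv, psi_xh g hg, psi_yh g hg]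
  have hc := conjGen g (i : ℕ) 0 (by have := i.isLt; omega)
  rw [add_zero] at hc
  calc dG g ^ (i : ℕ) * t g 0 * (dG g ^ (i : ℕ))⁻¹
      = t g (i : ℕ) * dG g ^ (i : ℕ) * (dG g ^ (i : ℕ))⁻¹ := by rw [hc]
    _ = t g (i : ℕ) := by group
  exact (t_of g i).symm

lemma phi_t {i : ℕ} (hi : i < 2 * g + 1) : phi g (t g i) = u g i := by
  rw [t, dif_pos hi]
  exact PresentedGroup.toGroup.of _

lemma comp_phi_psi (hg : 1 ≤ g) : (phi g).comp (psi g hg) = MonoidHom.id (Hq g) := by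
  apply PresentedGroup.ext
  intro c
  simp only [MonoidHom.comp_apply, MonoidHom.id_apply]
  cases c
  · rw [show psi g hg (PresentedGroup.of false) = dG g from PresentedGroup.toGroup.of _]
    show phi g (P g (2 * g + 1)) = _
    unfold P
    rw [map_list_prod, List.map_map]
    have : List.map (⇑(phi g) ∘ t g) (List.range (2 * g + 1))
        = List.map (u g) (List.range (2 * g + 1)) := by
      apply List.map_congr_left
      intro i hi
      rw [List.mem_range] at hi
      exact phi_t g hi
    rw [this, uprod_eq]
    rfl
  · rw [show psi g hg (PresentedGroup.of true) = t g 0 from PresentedGroup.toGroup.of _]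
    rw [phi_t g (by omega)]
    show yh g ^ 0 * xh g * (yh g ^ 0)⁻¹ = _
    simp [xh]

end Stmt10Aux

/-- for `g ≥ 2`, the Birman–Hilden presentation of the genus-`g`
hyperelliptic mapping class group on the generators `σ_1, …, σ_{2g+1}` is isomorphic to the
two-generator presented group, via an isomorphism sending `σ_i` to `y^{i-1} x y^{1-i}` for
each `1 ≤ i ≤ 2g+1`. -/
theorem stmt10 (g : ℕ) (hg : 2 ≤ g) :
    ∃ e : PresentedGroup (hypRels g) ≃* PresentedGroup (xyHypRels g),
      ∀ i : Fin (2 * g + 1),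
        e (PresentedGroup.of i)
          = (PresentedGroup.of false : PresentedGroup (xyHypRels g)) ^ (i : ℕ) *
              PresentedGroup.of true *
              ((PresentedGroup.of false : PresentedGroup (xyHypRels g)) ^ (i : ℕ))⁻¹ := by
  have hg1 : 1 ≤ g := by omega
  refine ⟨MonoidHom.toMulEquiv (Stmt10Aux.phi g) (Stmt10Aux.psi g hg1)
    (Stmt10Aux.comp_psi_phi g hg1) (Stmt10Aux.comp_phi_psi g hg1), fun i => ?_⟩
  show Stmt10Aux.phi g (PresentedGroup.of i) = _
  rw [show Stmt10Aux.phi g (PresentedGroup.of i) = Stmt10Aux.u g i from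
    PresentedGroup.toGroup.of _]
  rfl
end

section
/- Let n ≥ 3. The presented group with generators σ_1, …, σ_{n−1} and relators σ_i σ_j σ_i^{−1} σ_j^{−1} for 1 ≤ i < j − 1 ≤ n − 2, σ_i σ_{i+1} σ_i σ_{i+1}^{−1} σ_i^{−1} σ_{i+1}^{−1} for 1 ≤ i ≤ n − 2, (σ_1 ⋯ σ_{n−1})^n, and σ_1 ⋯ σ_{n−1} σ_{n−1} ⋯ σ_1 (Magnus's presentation of the mapping class group of the n-punctured sphere) is isomorphic to the presented group with generators x, y and relators x y^k x y^{−k} x^{−1} y^k x^{−1} y^{−k} for 2 ≤ k ≤ n − 2, x y x y^{−1} x y x^{−1} y^{−1} x^{−1} y x^{−1} y^{−1}, (xy)^{n−1} y^{−n}, y^n, and (y^{−1} x)^{n−1}, via an isomorphism sending σ_i to y^{i−1} x y^{1−i} for each 1 ≤ i ≤ n − 1. -/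
/-- Magnus's relators for the mapping class group of the `n`-punctured sphere, on the
generators `σ_1, …, σ_{n-1}`. -/
def sphereRels (n : ℕ) : Set (FreeGroup (Fin (n - 1))) :=
  {w | (∃ i j : Fin (n - 1), (i : ℕ) + 1 < (j : ℕ) ∧
          w = S _ i * S _ j * (S _ i)⁻¹ * (S _ j)⁻¹)
     ∨ (∃ i j : Fin (n - 1), (j : ℕ) = (i : ℕ) + 1 ∧
          w = S _ i * S _ j * S _ i * (S _ j)⁻¹ * (S _ i)⁻¹ * (S _ j)⁻¹)
     ∨ w = deltaWord (n - 1) ^ n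
     ∨ w = deltaWord (n - 1) * deltaRevWord (n - 1)}

/-- The two-generator relators of the mapping class group of the `n`-punctured sphere. -/
def xySphereRels (n : ℕ) : Set (FreeGroup Bool) :=
  {w | (∃ k : ℕ, 2 ≤ k ∧ k ≤ n - 2 ∧
          w = X * Y ^ k * X * (Y ^ k)⁻¹ * X⁻¹ * Y ^ k * X⁻¹ * (Y ^ k)⁻¹)
     ∨ w = X * Y * X * Y⁻¹ * X * Y * X⁻¹ * Y⁻¹ * X⁻¹ * Y * X⁻¹ * Y⁻¹
     ∨ w = (X * Y) ^ (n - 1) * (Y ^ n)⁻¹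
     ∨ w = Y ^ n
     ∨ w = (Y⁻¹ * X) ^ (n - 1)}

namespace Stmt11Aux
section Generic
variable {G : Type*} [Group G]


lemma comm_of_rel (u v : G) (h : u * v * u⁻¹ * v⁻¹ = 1) : Commute u v := by
  have : u * v = (u * v * u⁻¹ * v⁻¹) * (v * u) := by group
  rw [h, one_mul] at this
  exact this

lemma braid_of_rel (u v : G) (h : u * v * u * v⁻¹ * u⁻¹ * v⁻¹ = 1) :
    u * v * u = v * u * v := by
  have : u * v * u = (u * v * u * v⁻¹ * u⁻¹ * v⁻¹) * (v * u * v) := by group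
  rw [h, one_mul] at this
  exact this

lemma conj_comm (c a b : G) (h : a * b * a⁻¹ * b⁻¹ = 1) :
    c * a * c⁻¹ * (c * b * c⁻¹) * (c * a * c⁻¹)⁻¹ * (c * b * c⁻¹)⁻¹ = 1 := by
  have h2 : c * a * c⁻¹ * (c * b * c⁻¹) * (c * a * c⁻¹)⁻¹ * (c * b * c⁻¹)⁻¹
      = c * (a * b * a⁻¹ * b⁻¹) * c⁻¹ := by group
  rw [h2, h]; group

lemma conj_braid (c a b : G) (h : a * b * a * b⁻¹ * a⁻¹ * b⁻¹ = 1) :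
    c * a * c⁻¹ * (c * b * c⁻¹) * (c * a * c⁻¹) * (c * b * c⁻¹)⁻¹ * (c * a * c⁻¹)⁻¹ *
      (c * b * c⁻¹)⁻¹ = 1 := by
  have h2 : c * a * c⁻¹ * (c * b * c⁻¹) * (c * a * c⁻¹) * (c * b * c⁻¹)⁻¹ * (c * a * c⁻¹)⁻¹ *
      (c * b * c⁻¹)⁻¹ = c * (a * b * a * b⁻¹ * a⁻¹ * b⁻¹) * c⁻¹ := by group
  rw [h2, h]; group

lemma prod_conj_range (x y : G) (k : ℕ) :
    ((List.range k).map (fun i => y ^ i * x * (y ^ i)⁻¹)).prod = (x * y) ^ k * (y ^ k)⁻¹ := by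
  induction k with
  | zero => simp
  | succ k ih =>
    rw [List.range_succ, List.map_append, List.prod_append, ih]
    simp only [List.map_cons, List.map_nil, List.prod_cons, List.prod_nil, mul_one]
    rw [pow_succ (x*y), pow_succ y]
    group

lemma prod_conj_range_rev (x y : G) (k : ℕ) :
    ((List.range k).reverse.map (fun i => y ^ i * x * (y ^ i)⁻¹)).prod
      = y ^ k * (y⁻¹ * x) ^ k := by
  induction k with
  | zero => simp
  | succ k ih =>
    rw [List.range_succ, List.reverse_append, List.map_append, List.prod_append, ih]
    simp only [List.reverse_cons, List.reverse_nil, List.nil_append, List.map_cons,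
      List.map_nil, List.prod_cons, List.prod_nil, mul_one]
    rw [pow_succ y, pow_succ' (y⁻¹ * x)]
    simp [mul_assoc]



lemma assoc_key (A T a b : G) (h1 : T * a = a * T) (h2 : A * b = b * A)
    (h3 : a * b * a = b * a * b) :
    A * a * b * T * a = b * (A * a * b * T) := by
  calc A * a * b * T * a = A * a * b * (T * a) := by rw [mul_assoc]
    _ = A * (a * b * a) * T := by rw [h1]; simp [mul_assoc]
    _ = A * (b * a * b) * T := by rw [h3]
    _ = A * b * (a * b * T) := by simp [mul_assoc]
    _ = b * (A * a * b * T) := by rw [h2]; simp [mul_assoc]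

lemma delta_conj (σ : ℕ → G) (m i : ℕ) (hi : i + 1 < m)
    (hcomm : ∀ a b : ℕ, a + 2 ≤ b → Commute (σ a) (σ b))
    (hbraid : σ i * σ (i + 1) * σ i = σ (i + 1) * σ i * σ (i + 1)) :
    ((List.range m).map σ).prod * σ i = σ (i + 1) * ((List.range m).map σ).prod := by
  obtain ⟨t, rfl⟩ : ∃ t, m = (i + 2) + t := ⟨m - (i + 2), by omega⟩
  rw [List.range_add, List.range_succ, List.range_succ]
  set A := ((List.range i).map σ).prod with hA
  set T := (((List.range t).map (fun x => i + 2 + x)).map σ).prod with hT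
  have hTc : T * σ i = σ i * T := by
    refine (Commute.list_prod_right _ _ ?_).symm.eq
    intro z hz
    simp only [List.mem_map] at hz
    obtain ⟨b, ⟨c, _, rfl⟩, rfl⟩ := hz
    exact hcomm i (i + 2 + c) (by omega)
  have hAc : A * σ (i + 1) = σ (i + 1) * A := by
    refine ((Commute.list_prod_right _ _ ?_).eq).symm
    intro z hz
    simp only [List.mem_map, List.mem_range] at hz
    obtain ⟨b, hb, rfl⟩ := hz
    exact (hcomm b (i + 1) (by omega)).symm
  have key := assoc_key A T (σ i) (σ (i + 1)) hTc hAc hbraid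
  simp only [List.map_append, List.prod_append, List.map_cons, List.map_nil,
    List.prod_cons, List.prod_nil, mul_one]
  simp only [mul_assoc] at key ⊢
  exact key

lemma pow_conj (D : G) (σ : ℕ → G) (m : ℕ)
    (h : ∀ i, i + 1 < m → D * σ i = σ (i + 1) * D) :
    ∀ k, k < m → D ^ k * σ 0 = σ k * D ^ k := by
  intro k
  induction k with
  | zero => simp
  | succ k ih =>
    intro hk
    have e1 : D ^ (k + 1) * σ 0 = D * (D ^ k * σ 0) := by rw [pow_succ']; rw [mul_assoc]
    rw [e1, ih (by omega), ← mul_assoc, h k (by omega), mul_assoc, ← pow_succ']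

lemma prod_pow (D : G) (σ : ℕ → G) (m : ℕ)
    (h : ∀ k, k < m → D ^ k * σ 0 = σ k * D ^ k) :
    ∀ k, k ≤ m → (σ 0 * D) ^ k = ((List.range k).map σ).prod * D ^ k := by
  intro k
  induction k with
  | zero => simp
  | succ k ih =>
    intro hk
    have hσ : D ^ k * σ 0 = σ k * D ^ k := h k (by omega)
    rw [pow_succ, ih (by omega), List.range_succ, List.map_append, List.prod_append]
    simp only [List.map_cons, List.map_nil, List.prod_cons, List.prod_nil, mul_one]
    calc ((List.range k).map σ).prod * D ^ k * (σ 0 * D)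
        = ((List.range k).map σ).prod * (D ^ k * σ 0) * D := by simp [mul_assoc]
      _ = ((List.range k).map σ).prod * (σ k * D ^ k) * D := by rw [hσ]
      _ = ((List.range k).map σ).prod * σ k * D ^ (k + 1) := by rw [pow_succ]; simp [mul_assoc]

lemma prod_pow_rev (D : G) (σ : ℕ → G) (m : ℕ)
    (h : ∀ k, k < m → D ^ k * σ 0 = σ k * D ^ k) :
    ∀ k, k ≤ m → D ^ k * (D⁻¹ * σ 0) ^ k = ((List.range k).reverse.map σ).prod := by
  intro k
  induction k with
  | zero => simp
  | succ k ih =>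
    intro hk
    have hσ : D ^ k * σ 0 = σ k * D ^ k := h k (by omega)
    rw [List.range_succ, List.reverse_append]
    simp only [List.reverse_cons, List.reverse_nil, List.nil_append, List.map_cons,
      List.map_append, List.prod_cons, List.cons_append, List.prod_nil, List.map_nil]
    rw [← ih (by omega), pow_succ' (D⁻¹ * σ 0)]
    calc D ^ (k + 1) * (D⁻¹ * σ 0 * (D⁻¹ * σ 0) ^ k)
        = (D ^ k * σ 0) * (D⁻¹ * σ 0) ^ k := by rw [pow_succ]; simp [mul_assoc]
      _ = σ k * (D ^ k * (D⁻¹ * σ 0) ^ k) := by rw [hσ]; simp [mul_assoc]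

end Generic

lemma relone {α : Type*} {rels : Set (FreeGroup α)} {r : FreeGroup α} (h : r ∈ rels) :
    PresentedGroup.mk rels r = 1 :=
  (QuotientGroup.eq_one_iff _).2 (Subgroup.subset_normalClosure h)

variable (n : ℕ)

abbrev Hgrp := PresentedGroup (xySphereRels n)
abbrev Ggrp := PresentedGroup (sphereRels n)

def xx : Hgrp n := PresentedGroup.of true
def yy : Hgrp n := PresentedGroup.of false
def φ : Fin (n - 1) → Hgrp n := fun i => yy n ^ (i : ℕ) * xx n * (yy n ^ (i : ℕ))⁻¹
def ss : ℕ → Ggrp n := fun a => if h : a < n - 1 then PresentedGroup.of ⟨a, h⟩ else 1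
def DG : Ggrp n := PresentedGroup.mk _ (deltaWord (n - 1))
def DrevG : Ggrp n := PresentedGroup.mk _ (deltaRevWord (n - 1))
def ψ0 : Bool → Ggrp n := fun b => if b then ss n 0 else DG n

lemma mkX : PresentedGroup.mk (xySphereRels n) X = xx n := rfl
lemma mkY : PresentedGroup.mk (xySphereRels n) Y = yy n := rfl
lemma mkS (i : Fin (n - 1)) : PresentedGroup.mk (sphereRels n) (S (n - 1) i)
    = PresentedGroup.of i := rfl

lemma hY : yy n ^ n = 1 := by
  have := relone (show Y ^ n ∈ xySphereRels n from Or.inr (Or.inr (Or.inr (Or.inl rfl))))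
  simpa only [map_pow, mkY] using this

lemma hXY : (xx n * yy n) ^ (n - 1) = 1 := by
  have := relone (show (X * Y) ^ (n - 1) * (Y ^ n)⁻¹ ∈ xySphereRels n from
    Or.inr (Or.inr (Or.inl rfl)))
  simp only [map_mul, map_pow, map_inv, mkX, mkY, hY, inv_one, mul_one] at this
  exact this

lemma hYX : ((yy n)⁻¹ * xx n) ^ (n - 1) = 1 := by
  have := relone (show (Y⁻¹ * X) ^ (n - 1) ∈ xySphereRels n from
    Or.inr (Or.inr (Or.inr (Or.inr rfl))))
  simpa only [map_mul, map_pow, map_inv, mkX, mkY] using this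

lemma hK (k : ℕ) (h2 : 2 ≤ k) (h3 : k ≤ n - 2) :
    xx n * yy n ^ k * xx n * (yy n ^ k)⁻¹ * (xx n)⁻¹ * yy n ^ k * (xx n)⁻¹ * (yy n ^ k)⁻¹
      = 1 := by
  have := relone (show X * Y ^ k * X * (Y ^ k)⁻¹ * X⁻¹ * Y ^ k * X⁻¹ * (Y ^ k)⁻¹
      ∈ xySphereRels n from Or.inl ⟨k, h2, h3, rfl⟩)
  simpa only [map_mul, map_pow, map_inv, mkX, mkY] using this

lemma hBr : xx n * yy n * xx n * (yy n)⁻¹ * xx n * yy n * (xx n)⁻¹ * (yy n)⁻¹ * (xx n)⁻¹ *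
    yy n * (xx n)⁻¹ * (yy n)⁻¹ = 1 := by
  have := relone (show X * Y * X * Y⁻¹ * X * Y * X⁻¹ * Y⁻¹ * X⁻¹ * Y * X⁻¹ * Y⁻¹
      ∈ xySphereRels n from Or.inr (Or.inl rfl))
  simpa only [map_mul, map_inv, mkX, mkY] using this


lemma hcomm : ∀ a b : ℕ, a + 2 ≤ b → Commute (ss n a) (ss n b) := by
  intro a b hab
  by_cases hb : b < n - 1
  · have ha : a < n - 1 := by omega
    have hmem : S (n-1) ⟨a, ha⟩ * S (n-1) ⟨b, hb⟩ * (S (n-1) ⟨a, ha⟩)⁻¹ * (S (n-1) ⟨b, hb⟩)⁻¹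
        ∈ sphereRels n := Or.inl ⟨⟨a, ha⟩, ⟨b, hb⟩, by simpa using (by omega : a + 1 < b), rfl⟩
    have h1 := relone hmem
    simp only [map_mul, map_inv, mkS] at h1
    have := comm_of_rel _ _ h1
    simpa only [ss, dif_pos ha, dif_pos hb] using this
  · have : ss n b = 1 := by simp [ss, hb]
    rw [this]; exact Commute.one_right _

lemma hbraid : ∀ a : ℕ, a + 1 < n - 1 →
    ss n a * ss n (a+1) * ss n a = ss n (a+1) * ss n a * ss n (a+1) := by
  intro a ha
  have ha' : a < n - 1 := by omega
  have hmem : S (n-1) ⟨a, ha'⟩ * S (n-1) ⟨a+1, ha⟩ * S (n-1) ⟨a, ha'⟩ * (S (n-1) ⟨a+1, ha⟩)⁻¹ *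
      (S (n-1) ⟨a, ha'⟩)⁻¹ * (S (n-1) ⟨a+1, ha⟩)⁻¹ ∈ sphereRels n :=
    Or.inr (Or.inl ⟨⟨a, ha'⟩, ⟨a+1, ha⟩, by simp, rfl⟩)
  have h1 := relone hmem
  simp only [map_mul, map_inv, mkS] at h1
  have := braid_of_rel _ _ h1
  simpa only [ss, dif_pos ha', dif_pos ha] using this

lemma DG_eq : DG n = ((List.range (n-1)).map (ss n)).prod := by
  rw [DG, deltaWord, map_list_prod, List.map_map]
  congr 1
  rw [← List.map_coe_finRange_eq_range, List.map_map]
  refine List.map_congr_left ?_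
  intro i _
  simp only [Function.comp_apply, mkS, ss, Fin.is_lt, dif_pos, Fin.eta]

lemma DrevG_eq : DrevG n = ((List.range (n-1)).reverse.map (ss n)).prod := by
  rw [DrevG, deltaRevWord, map_list_prod, List.map_map]
  congr 1
  rw [← List.map_coe_finRange_eq_range, ← List.map_reverse, List.map_map]
  refine List.map_congr_left ?_
  intro i _
  simp only [Function.comp_apply, mkS, ss, Fin.is_lt, dif_pos, Fin.eta]

lemma hDn : DG n ^ n = 1 := by
  have := relone (show deltaWord (n-1) ^ n ∈ sphereRels n from Or.inr (Or.inr (Or.inl rfl)))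
  simpa only [map_pow, DG] using this

lemma hDDrev : DG n * DrevG n = 1 := by
  have := relone (show deltaWord (n-1) * deltaRevWord (n-1) ∈ sphereRels n from
    Or.inr (Or.inr (Or.inr rfl)))
  simpa only [map_mul, DG, DrevG] using this

lemma hconj : ∀ i : ℕ, i + 1 < n - 1 → DG n * ss n i = ss n (i+1) * DG n := by
  intro i hi
  rw [DG_eq]
  exact delta_conj (ss n) (n-1) i hi (hcomm n) (hbraid n i hi)

lemma hpowconj : ∀ k, k < n - 1 → DG n ^ k * ss n 0 = ss n k * DG n ^ k :=
  pow_conj (DG n) (ss n) (n-1) (hconj n)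

lemma liftφ_S (i : Fin (n-1)) : FreeGroup.lift (φ n) (S (n-1) i) = φ n i :=
  FreeGroup.lift_apply_of

lemma liftφ_delta : FreeGroup.lift (φ n) (deltaWord (n-1))
    = (xx n * yy n) ^ (n-1) * (yy n ^ (n-1))⁻¹ := by
  rw [deltaWord, map_list_prod, List.map_map, ← prod_conj_range (xx n) (yy n) (n-1),
    ← List.map_coe_finRange_eq_range, List.map_map]
  congr 1
  refine List.map_congr_left fun i _ => ?_
  simp only [Function.comp_apply, liftφ_S, φ]

lemma liftφ_deltaRev : FreeGroup.lift (φ n) (deltaRevWord (n-1))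
    = yy n ^ (n-1) * ((yy n)⁻¹ * xx n) ^ (n-1) := by
  rw [deltaRevWord, map_list_prod, List.map_map,
    ← prod_conj_range_rev (xx n) (yy n) (n-1), ← List.map_coe_finRange_eq_range,
    ← List.map_reverse, List.map_map]
  congr 1
  refine List.map_congr_left fun i _ => ?_
  simp only [Function.comp_apply, liftφ_S, φ]

variable (hn : 3 ≤ n)
include hn

lemma yy_pow_inv : (yy n ^ (n-1))⁻¹ = yy n := by
  refine inv_eq_of_mul_eq_one_right ?_
  rw [← pow_succ]
  rw [show n - 1 + 1 = n by omega]
  exact hY n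

lemma hf : ∀ r ∈ sphereRels n, FreeGroup.lift (φ n) r = 1 := by
  intro r hr
  rcases hr with ⟨i, j, hij, rfl⟩ | ⟨i, j, hij, rfl⟩ | rfl | rfl
  · simp only [map_mul, map_inv, liftφ_S, φ]
    set k : ℕ := (j : ℕ) - (i : ℕ) with hk
    have h2 : 2 ≤ k := by omega
    have h3 : k ≤ n - 2 := by have := j.isLt; omega
    have hji : (j : ℕ) = (i : ℕ) + k := by omega
    have hb : xx n * (yy n ^ k * xx n * (yy n ^ k)⁻¹) * (xx n)⁻¹ *
        (yy n ^ k * xx n * (yy n ^ k)⁻¹)⁻¹ = 1 := by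
      have h0 := hK n k h2 h3
      calc xx n * (yy n ^ k * xx n * (yy n ^ k)⁻¹) * (xx n)⁻¹ *
            (yy n ^ k * xx n * (yy n ^ k)⁻¹)⁻¹
          = xx n * yy n ^ k * xx n * (yy n ^ k)⁻¹ * (xx n)⁻¹ * yy n ^ k * (xx n)⁻¹ *
            (yy n ^ k)⁻¹ := by group
        _ = 1 := h0
    have key := conj_comm (yy n ^ (i : ℕ)) (xx n) (yy n ^ k * xx n * (yy n ^ k)⁻¹) hb
    rw [hji, pow_add]
    calc yy n ^ (i:ℕ) * xx n * (yy n ^ (i:ℕ))⁻¹ *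
          (yy n ^ (i:ℕ) * yy n ^ k * xx n * (yy n ^ (i:ℕ) * yy n ^ k)⁻¹) *
          (yy n ^ (i:ℕ) * xx n * (yy n ^ (i:ℕ))⁻¹)⁻¹ *
          (yy n ^ (i:ℕ) * yy n ^ k * xx n * (yy n ^ (i:ℕ) * yy n ^ k)⁻¹)⁻¹
        = yy n ^ (i:ℕ) * xx n * (yy n ^ (i:ℕ))⁻¹ *
          (yy n ^ (i:ℕ) * (yy n ^ k * xx n * (yy n ^ k)⁻¹) * (yy n ^ (i:ℕ))⁻¹) *
          (yy n ^ (i:ℕ) * xx n * (yy n ^ (i:ℕ))⁻¹)⁻¹ *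
          (yy n ^ (i:ℕ) * (yy n ^ k * xx n * (yy n ^ k)⁻¹) * (yy n ^ (i:ℕ))⁻¹)⁻¹ := by
            group
      _ = 1 := key
  · simp only [map_mul, map_inv, liftφ_S, φ]
    have hb : xx n * (yy n * xx n * (yy n)⁻¹) * xx n * (yy n * xx n * (yy n)⁻¹)⁻¹ *
        (xx n)⁻¹ * (yy n * xx n * (yy n)⁻¹)⁻¹ = 1 := by
      have h0 := hBr n
      calc xx n * (yy n * xx n * (yy n)⁻¹) * xx n * (yy n * xx n * (yy n)⁻¹)⁻¹ *
            (xx n)⁻¹ * (yy n * xx n * (yy n)⁻¹)⁻¹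
          = xx n * yy n * xx n * (yy n)⁻¹ * xx n * yy n * (xx n)⁻¹ * (yy n)⁻¹ * (xx n)⁻¹ *
            yy n * (xx n)⁻¹ * (yy n)⁻¹ := by group
        _ = 1 := h0
    have key := conj_braid (yy n ^ (i : ℕ)) (xx n) (yy n * xx n * (yy n)⁻¹) hb
    rw [hij, pow_add, pow_one]
    calc yy n ^ (i:ℕ) * xx n * (yy n ^ (i:ℕ))⁻¹ *
          (yy n ^ (i:ℕ) * yy n * xx n * (yy n ^ (i:ℕ) * yy n)⁻¹) *
          (yy n ^ (i:ℕ) * xx n * (yy n ^ (i:ℕ))⁻¹) *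
          (yy n ^ (i:ℕ) * yy n * xx n * (yy n ^ (i:ℕ) * yy n)⁻¹)⁻¹ *
          (yy n ^ (i:ℕ) * xx n * (yy n ^ (i:ℕ))⁻¹)⁻¹ *
          (yy n ^ (i:ℕ) * yy n * xx n * (yy n ^ (i:ℕ) * yy n)⁻¹)⁻¹
        = yy n ^ (i:ℕ) * xx n * (yy n ^ (i:ℕ))⁻¹ *
          (yy n ^ (i:ℕ) * (yy n * xx n * (yy n)⁻¹) * (yy n ^ (i:ℕ))⁻¹) *
          (yy n ^ (i:ℕ) * xx n * (yy n ^ (i:ℕ))⁻¹) *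
          (yy n ^ (i:ℕ) * (yy n * xx n * (yy n)⁻¹) * (yy n ^ (i:ℕ))⁻¹)⁻¹ *
          (yy n ^ (i:ℕ) * xx n * (yy n ^ (i:ℕ))⁻¹)⁻¹ *
          (yy n ^ (i:ℕ) * (yy n * xx n * (yy n)⁻¹) * (yy n ^ (i:ℕ))⁻¹)⁻¹ := by group
      _ = 1 := key
  · rw [map_pow, liftφ_delta, hXY, one_mul, yy_pow_inv n hn, hY]
  · rw [map_mul, liftφ_delta, liftφ_deltaRev, hXY, one_mul, yy_pow_inv n hn, hYX, mul_one,
      ← pow_succ', show n - 1 + 1 = n by omega, hY]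

omit hn in
lemma liftψ_X : FreeGroup.lift (ψ0 n) X = ss n 0 := by
  simp [X, ψ0]

omit hn in
lemma liftψ_Y : FreeGroup.lift (ψ0 n) Y = DG n := by
  simp [Y, ψ0]

lemma hg : ∀ r ∈ xySphereRels n, FreeGroup.lift (ψ0 n) r = 1 := by
  intro r hr
  rcases hr with ⟨k, h2, h3, rfl⟩ | rfl | rfl | rfl | rfl
  · simp only [map_mul, map_pow, map_inv, liftψ_X, liftψ_Y]
    have hk' : k < n - 1 := by omega
    have hcj : DG n ^ k * ss n 0 * (DG n ^ k)⁻¹ = ss n k := by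
      rw [hpowconj n k hk']; group
    have hcm := (hcomm n 0 k (by omega)).eq
    calc ss n 0 * DG n ^ k * ss n 0 * (DG n ^ k)⁻¹ * (ss n 0)⁻¹ * DG n ^ k * (ss n 0)⁻¹ *
          (DG n ^ k)⁻¹
        = ss n 0 * (DG n ^ k * ss n 0 * (DG n ^ k)⁻¹) * (ss n 0)⁻¹ *
          (DG n ^ k * ss n 0 * (DG n ^ k)⁻¹)⁻¹ := by group
      _ = ss n 0 * ss n k * (ss n 0)⁻¹ * (ss n k)⁻¹ := by rw [hcj]
      _ = 1 := by rw [hcm]; group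
  · simp only [map_mul, map_inv, liftψ_X, liftψ_Y]
    have hcj1 : DG n * ss n 0 * (DG n)⁻¹ = ss n 1 := by
      have h1 := hpowconj n 1 (by omega)
      rw [pow_one] at h1
      rw [h1]; group
    have hb := hbraid n 0 (by omega)
    calc ss n 0 * DG n * ss n 0 * (DG n)⁻¹ * ss n 0 * DG n * (ss n 0)⁻¹ * (DG n)⁻¹ *
          (ss n 0)⁻¹ * DG n * (ss n 0)⁻¹ * (DG n)⁻¹
        = ss n 0 * (DG n * ss n 0 * (DG n)⁻¹) * ss n 0 * (DG n * ss n 0 * (DG n)⁻¹)⁻¹ *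
          (ss n 0)⁻¹ * (DG n * ss n 0 * (DG n)⁻¹)⁻¹ := by group
      _ = ss n 0 * ss n 1 * ss n 0 * (ss n 1)⁻¹ * (ss n 0)⁻¹ * (ss n 1)⁻¹ := by rw [hcj1]
      _ = (ss n 0 * ss n 1 * ss n 0) * (ss n 1 * ss n 0 * ss n 1)⁻¹ := by group
      _ = 1 := by rw [hb]; group
  · simp only [map_mul, map_pow, map_inv, liftψ_X, liftψ_Y]
    have hp := prod_pow (DG n) (ss n) (n-1) (hpowconj n) (n-1) le_rfl
    rw [hp, ← DG_eq, ← pow_succ', show n - 1 + 1 = n by omega]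
    simp
  · simp only [map_pow, liftψ_Y]
    exact hDn n
  · simp only [map_mul, map_pow, map_inv, liftψ_X, liftψ_Y]
    have hr := prod_pow_rev (DG n) (ss n) (n-1) (hpowconj n) (n-1) le_rfl
    rw [← DrevG_eq] at hr
    have hrev : DrevG n = (DG n)⁻¹ := (inv_eq_of_mul_eq_one_right (hDDrev n)).symm
    have h5 : ((DG n)⁻¹ * ss n 0) ^ (n-1) = (DG n ^ (n-1))⁻¹ * DrevG n := by
      rw [← hr]; group
    rw [h5, hrev, ← mul_inv_rev, ← pow_succ', show n - 1 + 1 = n by omega, hDn, inv_one]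


noncomputable def fHom : Ggrp n →* Hgrp n := PresentedGroup.toGroup (hf n hn)
noncomputable def gHom : Hgrp n →* Ggrp n := PresentedGroup.toGroup (hg n hn)

lemma f_of (i : Fin (n-1)) : fHom n hn (PresentedGroup.of i) = φ n i :=
  PresentedGroup.toGroup.of _

lemma g_of_true : gHom n hn (PresentedGroup.of true) = ss n 0 := by
  show PresentedGroup.toGroup (hg n hn) (PresentedGroup.of true) = ss n 0
  rw [PresentedGroup.toGroup.of]
  simp [ψ0]

lemma g_of_false : gHom n hn (PresentedGroup.of false) = DG n := by
  show PresentedGroup.toGroup (hg n hn) (PresentedGroup.of false) = DG n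
  rw [PresentedGroup.toGroup.of]
  simp [ψ0]

lemma f_mk (w : FreeGroup (Fin (n-1))) :
    fHom n hn (PresentedGroup.mk _ w) = FreeGroup.lift (φ n) w := by
  have h : (fHom n hn).comp (PresentedGroup.mk (sphereRels n)) = FreeGroup.lift (φ n) :=
    FreeGroup.ext_hom _ _ (fun a => by
      show fHom n hn (PresentedGroup.of a) = _
      rw [f_of]
      simp)
  exact DFunLike.congr_fun h w

lemma gf : (gHom n hn).comp (fHom n hn) = MonoidHom.id (Ggrp n) := by
  apply PresentedGroup.ext
  intro i
  rw [MonoidHom.comp_apply, MonoidHom.id_apply, f_of]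
  show gHom n hn (yy n ^ (i:ℕ) * xx n * (yy n ^ (i:ℕ))⁻¹) = _
  rw [map_mul, map_mul, map_inv, map_pow]
  show gHom n hn (PresentedGroup.of false) ^ (i:ℕ) * gHom n hn (PresentedGroup.of true) *
      (gHom n hn (PresentedGroup.of false) ^ (i:ℕ))⁻¹ = _
  rw [g_of_true, g_of_false, hpowconj n i i.isLt, mul_inv_cancel_right]
  simp [ss, i.isLt]

lemma fg : (fHom n hn).comp (gHom n hn) = MonoidHom.id (Hgrp n) := by
  apply PresentedGroup.ext
  intro b
  rw [MonoidHom.comp_apply, MonoidHom.id_apply]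
  cases b
  · rw [g_of_false]
    show fHom n hn (PresentedGroup.mk _ (deltaWord (n-1))) = _
    rw [f_mk, liftφ_delta, hXY, one_mul, yy_pow_inv n hn]
    rfl
  · rw [g_of_true]
    have h0 : (0 : ℕ) < n - 1 := by omega
    show fHom n hn (ss n 0) = _
    rw [show ss n 0 = PresentedGroup.of ⟨0, h0⟩ from by simp [ss, h0], f_of]
    show yy n ^ ((⟨0, h0⟩ : Fin (n-1)) : ℕ) * xx n * (yy n ^ ((⟨0, h0⟩ : Fin (n-1)) : ℕ))⁻¹ = _
    simp [xx]

end Stmt11Aux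

/-- for `n ≥ 3`, Magnus's presentation of the mapping class group of the
`n`-punctured sphere on the generators `σ_1, …, σ_{n-1}` is isomorphic to the
two-generator presented group, via an isomorphism sending `σ_i` to `y^{i-1} x y^{1-i}` for
each `1 ≤ i ≤ n-1`. -/
theorem stmt11 (n : ℕ) (hn : 3 ≤ n) :
    ∃ e : PresentedGroup (sphereRels n) ≃* PresentedGroup (xySphereRels n),
      ∀ i : Fin (n - 1),
        e (PresentedGroup.of i)
          = (PresentedGroup.of false : PresentedGroup (xySphereRels n)) ^ (i : ℕ) *
              PresentedGroup.of true *
              ((PresentedGroup.of false : PresentedGroup (xySphereRels n)) ^ (i : ℕ))⁻¹ := by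
  refine ⟨MonoidHom.toMulEquiv (Stmt11Aux.fHom n hn) (Stmt11Aux.gHom n hn)
    (Stmt11Aux.gf n hn) (Stmt11Aux.fg n hn), fun i => ?_⟩
  show Stmt11Aux.fHom n hn (PresentedGroup.of i) = _
  rw [Stmt11Aux.f_of]
  rfl
end
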